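/- arXiv:1603.06902 — 4 statements merged into one kernel-verified Lean document; each statement's English description precedes it below -/
import Mathlib

section
/- Let G be the free product of m copies of Z₂, i.e. G = F(g₁,...,g_m)/(g_i² = 1). Then the commutator subgroup G' is a free group of rank (m−2)·2^{m−1} + 1. -/
open Multiplicative

abbrev Q2 := Multiplicative (ZMod 2)

def q2gen : Q2 := ofAdd 1

lemma q2_cases (x : Q2) : x = 1 ∨ x = q2gen := by
  have : ∀ z : ZMod 2, z = 0 ∨ z = 1 := by decide
  rcases this x.toAdd with h | h
  · left; rw [← ofAdd_toAdd x, h]; rfl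
  · right; rw [← ofAdd_toAdd x, h]; rfl

/-- hom out of `Q2` determined by an involution -/
def zmod2Hom {T : Type*} [Monoid T] (t : T) (ht : t * t = 1) : Q2 →* T where
  toFun x := if x.toAdd = 0 then 1 else t
  map_one' := by simp
  map_mul' x y := by
    have h2 : ∀ z : ZMod 2, z = 0 ∨ z = 1 := by decide
    have h11 : (1 + 1 : ZMod 2) = 0 := by decide
    have h10 : (1 : ZMod 2) ≠ 0 := by decide
    rcases h2 x.toAdd with hx | hx <;> rcases h2 y.toAdd with hy | hy <;>
      simp [toAdd_mul, hx, hy, ht, h11, h10]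

@[simp] lemma zmod2Hom_gen {T : Type*} [Monoid T] (t : T) (ht : t * t = 1) :
    zmod2Hom t ht q2gen = t := by
  have h10 : (1 : ZMod 2) ≠ 0 := by decide
  simp [zmod2Hom, q2gen, h10]

lemma q2hom_ext {T : Type*} [Monoid T] {f g : Q2 →* T} (h : f q2gen = g q2gen) : f = g := by
  apply MonoidHom.ext; intro x
  rcases q2_cases x with rfl | rfl <;> simp [h]

lemma q2gen_mul_self : q2gen * q2gen = 1 := by decide

lemma q2gen_inv : q2gen⁻¹ = q2gen := by decide

section InvAut
variable (α : Type*)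

private lemma invhom_comp :
    (FreeGroup.lift fun x : α => (FreeGroup.of x)⁻¹).comp
      (FreeGroup.lift fun x : α => (FreeGroup.of x)⁻¹) = MonoidHom.id _ := by
  apply FreeGroup.ext_hom
  intro x
  simp

/-- The automorphism of a free group inverting all generators. -/
def invAut : MulAut (FreeGroup α) :=
  MonoidHom.toMulEquiv (FreeGroup.lift fun x : α => (FreeGroup.of x)⁻¹)
    (FreeGroup.lift fun x : α => (FreeGroup.of x)⁻¹) (invhom_comp α) (invhom_comp α)

@[simp] lemma invAut_of (x : α) : invAut α (FreeGroup.of x) = (FreeGroup.of x)⁻¹ := by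
  simp [invAut]

lemma invAut_sq : invAut α * invAut α = 1 := by
  apply MulEquiv.ext
  intro x
  have := DFunLike.congr_fun (invhom_comp α) x
  simpa [invAut] using this

/-- The action of `Q2` on a free group by inverting generators. -/
def invAction : Q2 →* MulAut (FreeGroup α) := zmod2Hom (invAut α) (invAut_sq α)

@[simp] lemma invAction_gen_of (x : α) :
    invAction α q2gen (FreeGroup.of x) = (FreeGroup.of x)⁻¹ := by
  simp [invAction]

end InvAut

namespace LemL
open FreeGroup SemidirectProduct Multiplicative

variable {k : ℕ} (φ : FreeGroup (Fin k) →* Q2) (a : Fin k)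

def eps (g : Fin k) : ZMod 2 := toAdd (φ (of g))

def gam (t : ZMod 2) (g : Fin k) : FreeGroup (Fin k) :=
  of a ^ t.val * of g * (of a ^ (t + eps φ g).val)⁻¹

/-- Basis for the kernel -/
abbrev B : Type := {p : ZMod 2 × Fin k // p ≠ (0, a)}

def gtil (p : ZMod 2 × Fin k) : FreeGroup (B a) :=
  if h : p = (0, a) then 1 else of ⟨p, h⟩

def fB : FreeGroup (B a) →* FreeGroup (Fin k) :=
  FreeGroup.lift fun b => gam φ a b.1.1 b.1.2

lemma eps_a (ha : φ (of a) = q2gen) : eps φ a = 1 := by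
  simp [eps, ha, q2gen]

lemma fB_gtil (ha : φ (of a) = q2gen) (p : ZMod 2 × Fin k) :
    fB φ a (gtil a p) = gam φ a p.1 p.2 := by
  by_cases h : p = (0, a)
  · subst h
    rw [show gtil a ((0 : ZMod 2), a) = 1 from dif_pos rfl, (fB φ a).map_one, gam, eps_a φ a ha]
    rw [show ((0 : ZMod 2)).val = 0 from rfl, show ((0 + 1 : ZMod 2)).val = 1 from rfl]
    group
  · simp [gtil, dif_neg h, fB]

def swAct : Q2 →* MulAut (FreeGroup (B a) × FreeGroup (B a)) :=
  zmod2Hom MulEquiv.prodComm (by apply MulEquiv.ext; intro x; rfl)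

@[simp] lemma swAct_gen (x : FreeGroup (B a) × FreeGroup (B a)) :
    swAct a q2gen x = (x.2, x.1) := by
  simp only [swAct, zmod2Hom_gen]
  rfl

@[simp] lemma swAct_one (x : FreeGroup (B a) × FreeGroup (B a)) :
    swAct a 1 x = x := by
  simp [swAct]

abbrev W : Type := (FreeGroup (B a) × FreeGroup (B a)) ⋊[swAct a] Q2

def Phi : FreeGroup (Fin k) →* W a :=
  FreeGroup.lift fun g => ⟨(gtil a (0, g), gtil a (1, g)), φ (of g)⟩

@[simp] lemma Phi_of (g : Fin k) :
    Phi φ a (of g) = ⟨(gtil a (0, g), gtil a (1, g)), φ (of g)⟩ := by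
  simp [Phi]

lemma right_eq_rightHom (x : W a) : x.right = rightHom x :=
  (congrFun rightHom_eq_right x).symm

lemma Phi_right (w : FreeGroup (Fin k)) : (Phi φ a w).right = φ w := by
  rw [right_eq_rightHom]
  have : (rightHom : W a →* Q2).comp (Phi φ a) = φ := by
    apply FreeGroup.ext_hom
    intro x
    simp only [MonoidHom.comp_apply]
    rw [Phi_of, mk_eq_inl_mul_inr, _root_.map_mul, rightHom_inl, rightHom_inr, one_mul]
  calc rightHom (Phi φ a w) = ((rightHom : W a →* Q2).comp (Phi φ a)) w := rfl
    _ = φ w := by rw [this]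

abbrev Cl (w : FreeGroup (Fin k)) : Prop :=
  fB φ a ((Phi φ a w).left.1) = w * (of a ^ (toAdd (φ w)).val)⁻¹ ∧
  fB φ a ((Phi φ a w).left.2) = of a * w * (of a ^ (toAdd (q2gen * φ w)).val)⁻¹

lemma v_one : (toAdd (1 : Q2)).val = 0 := rfl
lemma v_gen : (toAdd q2gen).val = 1 := rfl
lemma v_gg : (toAdd (q2gen * q2gen)).val = 0 := rfl
lemma v_g1 : (toAdd (q2gen * 1)).val = 1 := rfl

lemma t_gen : toAdd q2gen = (1 : ZMod 2) := rfl

lemma Cl_one : Cl φ a 1 := by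
  constructor
  · simp [_root_.map_one, v_one]
  · simp only [_root_.map_one, one_left, Prod.snd_one, mul_one, v_gen, pow_one]
    group

lemma Cl_of (ha : φ (of a) = q2gen) (g : Fin k) : Cl φ a (of g) := by
  have h0 : ((0 : ZMod 2)).val = 0 := rfl
  have h1 : ((1 : ZMod 2)).val = 1 := rfl
  constructor
  · rw [Phi_of]
    show fB φ a (gtil a (0, g)) = _
    rw [fB_gtil φ a ha]
    simp [gam, eps, h0, zero_add]
  · rw [Phi_of]
    show fB φ a (gtil a (1, g)) = _
    rw [fB_gtil φ a ha]
    simp [gam, eps, h1, toAdd_mul, t_gen, pow_one]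

lemma Cl_inv (w : FreeGroup (Fin k)) (h : Cl φ a w) : Cl φ a w⁻¹ := by
  obtain ⟨h1, h2⟩ := h
  rcases q2_cases (φ w) with hw | hw <;>
  · constructor <;>
    · simp only [_root_.map_inv, inv_left, inv_right, Phi_right, hw, inv_one, q2gen_inv,
        swAct_one, swAct_gen, Prod.fst_inv, Prod.snd_inv, Prod.fst_mul, Prod.snd_mul,
        h1, h2, v_one, v_gen, v_gg, v_g1, pow_zero, pow_one, mul_one, one_mul,
        mul_inv_rev, inv_inv, mul_one]
      all_goals group

lemma Cl_mul (w₁ w₂ : FreeGroup (Fin k)) (hc1 : Cl φ a w₁) (hc2 : Cl φ a w₂) :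
    Cl φ a (w₁ * w₂) := by
  obtain ⟨h1, h2⟩ := hc1
  obtain ⟨h3, h4⟩ := hc2
  rcases q2_cases (φ w₁) with hw1 | hw1 <;> rcases q2_cases (φ w₂) with hw2 | hw2 <;>
  · constructor <;>
    · simp only [_root_.map_mul, mul_left, mul_right, Phi_right, hw1, hw2,
        swAct_one, swAct_gen, Prod.fst_mul, Prod.snd_mul, Prod.fst_inv, Prod.snd_inv,
        h1, h2, h3, h4, v_one, v_gen, v_gg, v_g1, pow_zero, pow_one, mul_one, one_mul,
        q2gen_mul_self]
      group

lemma claimC (ha : φ (of a) = q2gen) (w : FreeGroup (Fin k)) : Cl φ a w := by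
  induction w using FreeGroup.induction_on with
  | C1 => exact Cl_one φ a
  | of x => exact Cl_of φ a ha x
  | inv_of x _ => exact Cl_inv φ a _ (Cl_of φ a ha x)
  | mul x y ihx ihy => exact Cl_mul φ a x y ihx ihy

lemma phi_gam (ha : φ (of a) = q2gen) (t : ZMod 2) (g : Fin k) : φ (gam φ a t g) = 1 := by
  have h2 : ∀ z : ZMod 2, z = 0 ∨ z = 1 := by decide
  rcases h2 t with rfl | rfl <;> rcases q2_cases (φ (of g)) with hg | hg <;>
    simp [gam, eps, _root_.map_mul, _root_.map_inv, _root_.map_pow, ha, hg] <;> decide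

lemma phi_fB (ha : φ (of a) = q2gen) (x : FreeGroup (B a)) : φ (fB φ a x) = 1 := by
  induction x using FreeGroup.induction_on with
  | C1 => simp
  | of b =>
      have hp : (pure b : FreeGroup (B a)) = of b := rfl
      have : fB φ a (of b) = gam φ a b.1.1 b.1.2 := FreeGroup.lift_apply_of
      rw [this, phi_gam φ a ha]
  | inv_of b ih => rw [_root_.map_inv, _root_.map_inv, ih, inv_one]
  | mul x y ihx ihy => rw [_root_.map_mul, _root_.map_mul, ihx, ihy, mul_one]

def fB' (ha : φ (of a) = q2gen) : FreeGroup (B a) →* φ.ker :=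
  (fB φ a).codRestrict φ.ker (fun x => MonoidHom.mem_ker.2 (phi_fB φ a ha x))

def rB : φ.ker →* FreeGroup (B a) where
  toFun w := (Phi φ a w.1).left.1
  map_one' := by
    simp only [Subgroup.coe_one, _root_.map_one, one_left, Prod.fst_one]
  map_mul' x y := by
    have hx : φ x.1 = 1 := x.2
    simp only [Subgroup.coe_mul, _root_.map_mul, mul_left, Phi_right, hx, swAct_one,
      Prod.fst_mul]

lemma fB_rB (ha : φ (of a) = q2gen) (w : φ.ker) : fB' φ a ha (rB φ a w) = w := by
  apply Subtype.ext
  have h1 := (claimC φ a ha w.1).1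
  have hw : φ w.1 = 1 := w.2
  rw [hw, v_one, pow_zero, inv_one, mul_one] at h1
  exact h1

lemma ne_pair (g : Fin k) : ((1 : ZMod 2), g) ≠ ((0 : ZMod 2), a) :=
  fun h => (by decide : ((1 : ZMod 2)) ≠ 0) (congrArg Prod.fst h)

lemma zv0 : ((0 : ZMod 2)).val = 0 := rfl
lemma zv1 : ((1 : ZMod 2)).val = 1 := rfl
lemma zv11 : ((1 + 1 : ZMod 2)).val = 0 := rfl

lemma rB_fB (ha : φ (of a) = q2gen) (b : B a) :
    rB φ a (fB' φ a ha (of b)) = of b := by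
  obtain ⟨⟨t, g⟩, hb⟩ := b
  have hfb : ((fB' φ a ha (of ⟨(t, g), hb⟩)) : FreeGroup (Fin k)) = gam φ a t g :=
    FreeGroup.lift_apply_of
  show (Phi φ a _).left.1 = _
  rw [hfb]
  have h2 : ∀ z : ZMod 2, z = 0 ∨ z = 1 := by decide
  have hPa : Phi φ a (of a) = ⟨(1, of ⟨((1 : ZMod 2), a), ne_pair a a⟩), q2gen⟩ := by
    rw [Phi_of, ha]
    congr 1
    show (gtil a (0, a), gtil a (1, a)) = _
    rw [show gtil a ((0 : ZMod 2), a) = 1 from dif_pos rfl,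
      show gtil a ((1 : ZMod 2), a) = of ⟨((1 : ZMod 2), a), ne_pair a a⟩ from
        dif_neg (ne_pair a a)]
  rcases h2 t with rfl | rfl <;> rcases q2_cases (φ (of g)) with hg | hg
  · -- t = 0, φ g = 1 : gam = of g
    have hgam : gam φ a 0 g = of g := by
      simp [gam, eps, hg, zv0]
    rw [hgam, Phi_of]
    show gtil a (0, g) = _
    rw [gtil, dif_neg hb]
  · -- t = 0, φ g = gen : gam = of g * (of a)⁻¹
    have hgam : gam φ a 0 g = of g * (of a)⁻¹ := by
      simp [gam, eps, hg, t_gen, zv0, zv1]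
    rw [hgam, _root_.map_mul, _root_.map_inv, hPa, Phi_of]
    simp only [mul_left, mul_right, inv_left, inv_right, q2gen_inv, swAct_gen, hg,
      Prod.fst_inv, Prod.snd_inv, inv_one]
    show gtil a (0, g) * _ = _
    rw [gtil, dif_neg hb]
    simp
  · -- t = 1, φ g = 1 : gam = a g a⁻¹
    have hgam : gam φ a 1 g = of a * of g * (of a)⁻¹ := by
      simp [gam, eps, hg, zv1]
    rw [hgam, _root_.map_mul, _root_.map_mul, _root_.map_inv, hPa, Phi_of]
    simp only [mul_left, mul_right, inv_left, inv_right, q2gen_inv, swAct_gen, swAct_one, hg,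
      Prod.fst_inv, Prod.snd_inv, inv_one, one_mul, mul_one]
    show gtil a (1, g) * _ = _
    rw [show gtil a ((1 : ZMod 2), g) = of ⟨((1 : ZMod 2), g), ne_pair a g⟩ from
      dif_neg (ne_pair a g)]
    simp
  · -- t = 1, φ g = gen : gam = a g
    have hgam : gam φ a 1 g = of a * of g := by
      simp [gam, eps, hg, t_gen, zv1, zv11]
    rw [hgam, _root_.map_mul, hPa, Phi_of]
    simp only [mul_left, swAct_gen, one_mul]
    show gtil a (1, g) = _
    rw [show gtil a ((1 : ZMod 2), g) = of ⟨((1 : ZMod 2), g), ne_pair a g⟩ from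
      dif_neg (ne_pair a g)]

end LemL

open FreeGroup in
lemma lemL {k : ℕ} (φ : FreeGroup (Fin k) →* Q2) (hs : Function.Surjective φ) :
    Nonempty (φ.ker ≃* FreeGroup (Fin (2 * k - 1))) := by
  have hex : ∃ a, φ (of a) = q2gen := by
    by_contra h
    push_neg at h
    have hall : ∀ g : Fin k, φ (of g) = 1 := fun g => (q2_cases (φ (of g))).resolve_right (h g)
    have hphi : φ = 1 := by
      apply FreeGroup.ext_hom
      intro x
      simp [hall x]
    obtain ⟨x, hx⟩ := hs q2gen
    rw [hphi] at hx
    simp only [MonoidHom.one_apply] at hx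
    exact (by decide : ¬(1 : Q2) = q2gen) hx
  obtain ⟨a, ha⟩ := hex
  have e1 : φ.ker ≃* FreeGroup (LemL.B a) :=
    MonoidHom.toMulEquiv (LemL.rB φ a) (LemL.fB' φ a ha)
      (by
        apply MonoidHom.ext
        intro w
        simp only [MonoidHom.comp_apply, MonoidHom.id_apply]
        exact LemL.fB_rB φ a ha w)
      (by
        apply FreeGroup.ext_hom
        intro b
        simp only [MonoidHom.comp_apply, MonoidHom.id_apply]
        exact LemL.rB_fB φ a ha b)
  have hcard : Fintype.card (LemL.B a) = 2 * k - 1 := by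
    have h1 : Fintype.card (LemL.B a) =
        Fintype.card (ZMod 2 × Fin k) - Fintype.card {p : ZMod 2 × Fin k // p = (0, a)} :=
      Fintype.card_subtype_compl _
    rw [h1, Fintype.card_subtype_eq, Fintype.card_prod, Fintype.card_fin, ZMod.card 2]
  exact ⟨e1.trans (FreeGroup.freeGroupCongr (Fintype.equivFinOfCardEq hcard))⟩

open FreeGroup in
lemma part5 : ∀ (d k : ℕ) (ψ : FreeGroup (Fin k) →* (Fin d → Q2)), Function.Surjective ψ →
    Nonempty (ψ.ker ≃* FreeGroup (Fin (2 ^ d * k - (2 ^ d - 1)))) := by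
  intro d
  induction d with
  | zero =>
      intro k ψ _
      have hker : ψ.ker = ⊤ := by
        ext x
        simp only [MonoidHom.mem_ker, Subgroup.mem_top, iff_true]
        funext i
        exact i.elim0
      have harith : k = 2 ^ 0 * k - (2 ^ 0 - 1) := by simp
      exact ⟨(MulEquiv.subgroupCongr hker).trans (Subgroup.topEquiv.trans
        (FreeGroup.freeGroupCongr (finCongr harith)))⟩
  | succ d ih =>
      intro k ψ hs
      have hk1 : 1 ≤ k := by
        by_contra hk
        have hk0 : k = 0 := by omega
        subst hk0
        have hw : ∀ w : FreeGroup (Fin 0), w = 1 := by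
          intro w
          induction w using FreeGroup.induction_on with
          | C1 => rfl
          | of x => exact x.elim0
          | inv_of x _ => exact x.elim0
          | mul x y hx hy => rw [hx, hy, one_mul]
        obtain ⟨x, hx⟩ := hs (fun _ => q2gen)
        rw [hw x, _root_.map_one] at hx
        have h0 := congrFun hx 0
        exact (by decide : ¬(1 : Q2) = q2gen) h0
      set φ' : FreeGroup (Fin k) →* Q2 :=
        (Pi.evalMonoidHom (fun _ : Fin (d + 1) => Q2) 0).comp ψ with hφ'
      have hs' : Function.Surjective φ' := by
        intro q
        obtain ⟨x, hx⟩ := hs (fun _ => q)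
        exact ⟨x, by simp [hφ', hx, Pi.evalMonoidHom]⟩
      obtain ⟨e⟩ := lemL φ' hs'
      set c : (Fin (d + 1) → Q2) →* (Fin d → Q2) :=
        Pi.monoidHom (fun i => Pi.evalMonoidHom (fun _ : Fin (d + 1) => Q2) i.succ) with hc
      set ψ₁ : FreeGroup (Fin (2 * k - 1)) →* (Fin d → Q2) :=
        c.comp ((ψ.comp φ'.ker.subtype).comp e.symm.toMonoidHom) with hψ₁
      have hcapp : ∀ v i, c v i = v i.succ := fun v i => rfl
      have hs1 : Function.Surjective ψ₁ := by
        intro w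
        obtain ⟨x, hx⟩ := hs (Fin.cons 1 w)
        have hxk : x ∈ φ'.ker := by
          show (ψ x) 0 = 1
          rw [hx]
          exact Fin.cons_zero _ _
        refine ⟨e ⟨x, hxk⟩, ?_⟩
        funext i
        simp only [hψ₁, MonoidHom.comp_apply, MulEquiv.coe_toMonoidHom, e.symm_apply_apply]
        rw [hcapp]
        show (ψ x) i.succ = w i
        rw [hx]
        exact Fin.cons_succ _ _ _
      have hle : ψ.ker ≤ φ'.ker := by
        intro x hx
        have : ψ x = 1 := hx
        simp only [MonoidHom.mem_ker, hφ', MonoidHom.comp_apply, this]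
        rfl
      have hC : (ψ.ker.subgroupOf φ'.ker).map e = ψ₁.ker := by
        ext y
        rw [Subgroup.map_equiv_eq_comap_symm, Subgroup.mem_comap]
        have hy0 : (ψ ((e.symm y : φ'.ker) : FreeGroup (Fin k))) 0 = 1 := (e.symm y).2
        constructor
        · intro h
          have h1 : ψ ((e.symm y : φ'.ker) : FreeGroup (Fin k)) = 1 := h
          show c (ψ ((e.symm y : φ'.ker) : FreeGroup (Fin k))) = 1
          rw [h1, _root_.map_one]
        · intro h
          have h1 : ψ₁ y = 1 := h
          have hv : ψ ((e.symm y : φ'.ker) : FreeGroup (Fin k)) = 1 := by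
            funext i
            refine Fin.cases ?_ ?_ i
            · exact hy0
            · intro j
              have := congrFun h1 j
              simpa only [hψ₁, MonoidHom.comp_apply, MulEquiv.coe_toMonoidHom, hcapp, Subgroup.coe_subtype, Pi.one_apply] using this
          show ψ ((e.symm y : φ'.ker) : FreeGroup (Fin k)) = 1
          exact hv
      obtain ⟨e2⟩ := ih (2 * k - 1) ψ₁ hs1
      have harith : 2 ^ d * (2 * k - 1) - (2 ^ d - 1) =
          2 ^ (d + 1) * k - (2 ^ (d + 1) - 1) := by
        have hE : 1 ≤ 2 ^ d := Nat.one_le_two_pow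
        have h2 : 2 ^ d * (2 * k - 1) + 2 ^ d = 2 ^ d * (2 * k) := by
          rw [← Nat.mul_succ]
          congr 1
          omega
        have h3 : 2 ^ (d + 1) * k = 2 ^ d * (2 * k) := by
          rw [pow_succ]
          ring
        have hQ : 2 ^ d * 2 ≤ 2 ^ d * (2 * k) := Nat.mul_le_mul_left _ (by omega)
        have hF : 2 ^ (d + 1) = 2 ^ d * 2 := pow_succ 2 d
        omega
      refine ⟨((Subgroup.subgroupOfEquivOfLe hle).symm.trans
        ((e.subgroupMap (ψ.ker.subgroupOf φ'.ker)).trans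
          (MulEquiv.subgroupCongr hC))).trans (e2.trans (freeGroupCongr (finCongr harith)))⟩

namespace MainPart
open SemidirectProduct Monoid

variable (n : ℕ)

abbrev Gm := Monoid.CoprodI (fun _ : Fin (n + 1) => Q2)
abbrev Km := FreeGroup (Fin n)
abbrev W2 := Km n ⋊[invAction (Fin n)] Q2

def aGen (i : Fin (n + 1)) : Gm n := Monoid.CoprodI.of (i := i) q2gen

lemma aGen_sq (i : Fin (n + 1)) : aGen n i * aGen n i = 1 := by
  rw [aGen, ← _root_.map_mul, q2gen_mul_self, _root_.map_one]

lemma aGen_inv (i : Fin (n + 1)) : (aGen n i)⁻¹ = aGen n i :=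
  inv_eq_of_mul_eq_one_right (aGen_sq n i)

def fwdGen (i : Fin (n + 1)) : W2 n :=
  Fin.cases (inr q2gen) (fun j => inl (FreeGroup.of j) * inr q2gen) i

lemma fwdGen_zero : fwdGen n 0 = inr q2gen := by simp [fwdGen]

lemma fwdGen_succ (j : Fin n) : fwdGen n j.succ = inl (FreeGroup.of j) * inr q2gen := by
  simp [fwdGen]

lemma fwdGen_sq (i : Fin (n + 1)) : fwdGen n i * fwdGen n i = 1 := by
  refine Fin.cases ?_ (fun j => ?_) i
  · rw [fwdGen_zero, ← _root_.map_mul, q2gen_mul_self, _root_.map_one]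
  · rw [fwdGen_succ, ← mk_eq_inl_mul_inr, mul_def]
    show (⟨FreeGroup.of j * invAction (Fin n) q2gen (FreeGroup.of j), q2gen * q2gen⟩ : W2 n) = 1
    rw [invAction_gen_of, mul_inv_cancel, q2gen_mul_self]
    rfl

def fwd : Gm n →* W2 n :=
  Monoid.CoprodI.lift (fun i => zmod2Hom (fwdGen n i) (fwdGen_sq n i))

lemma fwd_aGen (i : Fin (n + 1)) : fwd n (aGen n i) = fwdGen n i := by
  rw [fwd, aGen, Monoid.CoprodI.lift_of, zmod2Hom_gen]

def f1 : Km n →* Gm n := FreeGroup.lift (fun j : Fin n => aGen n j.succ * aGen n 0)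

def f2 : Q2 →* Gm n := zmod2Hom (aGen n 0) (aGen_sq n 0)

lemma compat : ∀ q : Q2, (f1 n).comp ((invAction (Fin n)) q).toMonoidHom =
    (MulAut.conj (f2 n q)).toMonoidHom.comp (f1 n) := by
  intro q
  rcases q2_cases q with rfl | rfl
  · apply FreeGroup.ext_hom
    intro j
    simp [f2]
  · apply FreeGroup.ext_hom
    intro j
    simp only [MonoidHom.comp_apply, MulEquiv.coe_toMonoidHom, invAction_gen_of,
      MulAut.conj_apply, f2, zmod2Hom_gen]
    rw [_root_.map_inv, f1, FreeGroup.lift_apply_of, mul_inv_rev, aGen_inv, aGen_inv]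
    simp [mul_assoc, aGen_sq]

def bwd : W2 n →* Gm n := SemidirectProduct.lift (f1 n) (f2 n) (compat n)

lemma bwd_fwd : (bwd n).comp (fwd n) = MonoidHom.id (Gm n) := by
  apply Monoid.CoprodI.ext_hom
  intro i
  apply q2hom_ext
  simp only [MonoidHom.comp_apply, MonoidHom.id_apply]
  show bwd n (fwd n (aGen n i)) = aGen n i
  rw [fwd_aGen]
  refine Fin.cases ?_ (fun j => ?_) i
  · rw [fwdGen_zero, bwd, SemidirectProduct.lift_inr, f2, zmod2Hom_gen]
  · rw [fwdGen_succ, _root_.map_mul, bwd, SemidirectProduct.lift_inl, SemidirectProduct.lift_inr,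
      f1, FreeGroup.lift_apply_of, f2, zmod2Hom_gen, mul_assoc, aGen_sq, mul_one]

lemma fwd_bwd : (fwd n).comp (bwd n) = MonoidHom.id (W2 n) := by
  apply SemidirectProduct.hom_ext
  · apply FreeGroup.ext_hom
    intro j
    simp only [MonoidHom.comp_apply, MonoidHom.id_apply]
    rw [bwd, SemidirectProduct.lift_inl, f1, FreeGroup.lift_apply_of, _root_.map_mul,
      fwd_aGen, fwd_aGen, fwdGen_zero, fwdGen_succ, mul_assoc, ← _root_.map_mul,
      q2gen_mul_self, _root_.map_one, mul_one]
  · apply q2hom_ext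
    simp only [MonoidHom.comp_apply, MonoidHom.id_apply]
    rw [bwd, SemidirectProduct.lift_inr, f2, zmod2Hom_gen, fwd_aGen, fwdGen_zero]

def Psi : Gm n ≃* W2 n :=
  MonoidHom.toMulEquiv (fwd n) (bwd n) (bwd_fwd n) (fwd_bwd n)

lemma Psi_symm_apply (x : W2 n) : (Psi n).symm x = bwd n x := rfl

def piAb : Gm n →* (Fin (n + 1) → Q2) :=
  Monoid.CoprodI.lift (fun i => MonoidHom.mulSingle (fun _ : Fin (n + 1) => Q2) i)

lemma piAb_aGen (i : Fin (n + 1)) : piAb n (aGen n i) = Pi.mulSingle i q2gen := by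
  rw [piAb, aGen, Monoid.CoprodI.lift_of]
  rfl

lemma commutator_eq_ker : commutator (Gm n) = (piAb n).ker := by
  apply le_antisymm (Abelianization.commutator_subset_ker (piAb n))
  intro g hg
  have hcomm' : Pairwise fun (i j : Fin (n + 1)) => ∀ (x y : Q2),
      Commute ((Abelianization.of.comp (Monoid.CoprodI.of (M := fun _ : Fin (n+1) => Q2) (i := i))) x)
        ((Abelianization.of.comp (Monoid.CoprodI.of (M := fun _ : Fin (n+1) => Q2) (i := j))) y) :=
    fun _ _ _ x y => Commute.all _ _
  set α := MonoidHom.noncommPiCoprod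
    (fun i => Abelianization.of.comp (Monoid.CoprodI.of (M := fun _ : Fin (n+1) => Q2) (i := i)))
    hcomm' with hα
  have key : α.comp (piAb n) = Abelianization.of := by
    apply Monoid.CoprodI.ext_hom
    intro i
    apply MonoidHom.ext
    intro x
    simp only [MonoidHom.comp_apply]
    rw [piAb, Monoid.CoprodI.lift_of]
    show α (Pi.mulSingle i x) = _
    rw [hα, MonoidHom.noncommPiCoprod_mulSingle]
    rfl
  have h1 : Abelianization.of g = 1 := by
    have := DFunLike.congr_fun key g
    simp only [MonoidHom.comp_apply] at this
    rw [← this, show piAb n g = 1 from hg, _root_.map_one]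
  exact (QuotientGroup.eq_one_iff g).1 h1

def pi2 : W2 n →* (Fin (n + 1) → Q2) := (piAb n).comp (Psi n).symm.toMonoidHom

lemma pi2_inl_of (j : Fin n) : pi2 n (inl (FreeGroup.of j)) =
    Pi.mulSingle j.succ q2gen * Pi.mulSingle (0 : Fin (n + 1)) q2gen := by
  rw [pi2, MonoidHom.comp_apply,
    show ((Psi n).symm.toMonoidHom (inl (FreeGroup.of j)) : Gm n)
      = bwd n (inl (FreeGroup.of j)) from rfl,
    bwd, SemidirectProduct.lift_inl, f1, FreeGroup.lift_apply_of, _root_.map_mul, piAb_aGen, piAb_aGen]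

lemma pi2_inr_gen : pi2 n (inr q2gen) = Pi.mulSingle (0 : Fin (n + 1)) q2gen := by
  rw [pi2, MonoidHom.comp_apply,
    show ((Psi n).symm.toMonoidHom (inr q2gen) : Gm n) = bwd n (inr q2gen) from rfl,
    bwd, SemidirectProduct.lift_inr, f2, zmod2Hom_gen, piAb_aGen]

def sHom : (Fin (n + 1) → Q2) →* Q2 :=
  MonoidHom.mk' (fun v => ∏ i, v i) (by
    intro a b
    simp [Finset.prod_mul_distrib])

def snHom : (Fin n → Q2) →* Q2 :=
  MonoidHom.mk' (fun v => ∏ i, v i) (by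
    intro a b
    simp [Finset.prod_mul_distrib])

lemma sHom_pi2 : (sHom n).comp (pi2 n) = rightHom := by
  apply SemidirectProduct.hom_ext
  · apply FreeGroup.ext_hom
    intro j
    simp only [MonoidHom.comp_apply]
    rw [pi2_inl_of, _root_.map_mul]
    show (∏ i, Pi.mulSingle j.succ q2gen i) * (∏ i, Pi.mulSingle (0 : Fin (n + 1)) q2gen i)
      = rightHom (inl (FreeGroup.of j))
    rw [Fintype.prod_pi_mulSingle', Fintype.prod_pi_mulSingle', q2gen_mul_self, rightHom_inl]
  · apply q2hom_ext
    simp only [MonoidHom.comp_apply]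
    rw [pi2_inr_gen, rightHom_inr]
    show (∏ i, Pi.mulSingle (0 : Fin (n + 1)) q2gen i) = q2gen
    rw [Fintype.prod_pi_mulSingle']

def psi0 : Km n →* (Fin (n + 1) → Q2) := (pi2 n).comp inl

lemma hker3 : (pi2 n).ker = (psi0 n).ker.map inl := by
  ext x
  constructor
  · intro hx
    have hr : rightHom x = 1 := by
      have h := DFunLike.congr_fun (sHom_pi2 n) x
      simp only [MonoidHom.comp_apply] at h
      rw [← h, show pi2 n x = 1 from hx, _root_.map_one]
    have hxr : x.right = 1 := (congrFun rightHom_eq_right x).symm.trans hr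
    have hx1 : inl x.left = x := by
      conv_rhs => rw [← inl_left_mul_inr_right x]
      rw [hxr, _root_.map_one, mul_one]
    refine Subgroup.mem_map.2 ⟨x.left, ?_, hx1⟩
    show pi2 n (inl x.left) = 1
    rw [hx1]
    exact hx
  · intro hx
    obtain ⟨y, hy, rfl⟩ := Subgroup.mem_map.1 hx
    show pi2 n (inl y) = 1
    exact hy

def cMap : (Fin (n + 1) → Q2) →* (Fin n → Q2) :=
  Pi.monoidHom (fun i => Pi.evalMonoidHom (fun _ : Fin (n + 1) => Q2) i.succ)

def psi' : Km n →* (Fin n → Q2) := (cMap n).comp (psi0 n)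

lemma psi'_of (j : Fin n) : psi' n (FreeGroup.of j) = Pi.mulSingle j q2gen := by
  funext i
  show (pi2 n (inl (FreeGroup.of j))) i.succ = _
  rw [pi2_inl_of, Pi.mul_apply]
  rw [Pi.mulSingle_eq_of_ne (Fin.succ_ne_zero i), mul_one]
  by_cases h : i = j
  · subst h
    rw [Pi.mulSingle_eq_same, Pi.mulSingle_eq_same]
  · rw [Pi.mulSingle_eq_of_ne (fun hc => h (Fin.succ_injective n hc)),
      Pi.mulSingle_eq_of_ne h]

lemma hker4 : (psi0 n).ker = (psi' n).ker := by
  apply le_antisymm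
  · intro x hx
    show cMap n (psi0 n x) = 1
    rw [show psi0 n x = 1 from hx, _root_.map_one]
  · intro w hw
    have hwv : psi' n w = 1 := hw
    have hp : (Pi.evalMonoidHom (fun _ : Fin (n + 1) => Q2) 0).comp (psi0 n)
        = (snHom n).comp (psi' n) := by
      apply FreeGroup.ext_hom
      intro j
      simp only [MonoidHom.comp_apply]
      rw [psi'_of]
      show (psi0 n (FreeGroup.of j)) 0 = snHom n (Pi.mulSingle j q2gen)
      rw [show snHom n (Pi.mulSingle j q2gen) = ∏ i, Pi.mulSingle j q2gen i from rfl,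
        Fintype.prod_pi_mulSingle']
      show (pi2 n (inl (FreeGroup.of j))) 0 = q2gen
      rw [pi2_inl_of, Pi.mul_apply]
      rw [Pi.mulSingle_eq_of_ne (Ne.symm (Fin.succ_ne_zero j)), Pi.mulSingle_eq_same, one_mul]
    show psi0 n w = 1
    funext i
    refine Fin.cases ?_ (fun j => ?_) i
    · have h := DFunLike.congr_fun hp w
      simp only [MonoidHom.comp_apply] at h
      show (psi0 n w) 0 = 1
      rw [show (psi0 n w) 0 = (Pi.evalMonoidHom (fun _ : Fin (n + 1) => Q2) 0) (psi0 n w) from rfl,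
        h, hwv, _root_.map_one]
    · show (psi0 n w) j.succ = 1
      exact congrFun hwv j

lemma hsurj : Function.Surjective (psi' n) := by
  intro v
  have hv : v ∈ (psi' n).range := by
    rw [show v = ∏ j, Pi.mulSingle j (v j) from (Finset.univ_prod_mulSingle v).symm]
    apply Subgroup.prod_mem
    intro j _
    rcases q2_cases (v j) with hj | hj
    · rw [hj, Pi.mulSingle_one]
      exact one_mem _
    · rw [hj]
      exact ⟨FreeGroup.of j, psi'_of n j⟩
  exact hv.imp (fun _ h => h)

lemma hker2 : ((piAb n).ker).map ((Psi n : Gm n ≃* W2 n) : Gm n →* W2 n) = (pi2 n).ker := by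
  ext x
  constructor
  · intro hx
    obtain ⟨g, hg, hgx⟩ := Subgroup.mem_map.1 hx
    show pi2 n x = 1
    have : pi2 n x = piAb n ((Psi n).symm x) := rfl
    rw [this, ← hgx]
    show piAb n ((Psi n).symm ((Psi n) g)) = 1
    rw [MulEquiv.symm_apply_apply]
    exact hg
  · intro hx
    refine Subgroup.mem_map.2 ⟨(Psi n).symm x, show piAb n ((Psi n).symm x) = 1 from hx, ?_⟩
    exact (Psi n).apply_symm_apply x

noncomputable def equiv_comm : commutator (Gm n) ≃* (psi' n).ker :=
  (MulEquiv.subgroupCongr (commutator_eq_ker n)).trans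
    (((Psi n).subgroupMap ((piAb n).ker)).trans
      ((MulEquiv.subgroupCongr (hker2 n)).trans
        ((MulEquiv.subgroupCongr (hker3 n)).trans
          ((Subgroup.equivMapOfInjective (psi0 n).ker inl inl_injective).symm.trans
            (MulEquiv.subgroupCongr (hker4 n))))))

end MainPart

/-- The commutator subgroup of the free product of `m ≥ 1` copies of `Z₂` is a free
group of rank `(m-2)·2^(m-1) + 1`. -/
theorem commutator_free_product_Z2 (m : ℕ) (hm : 1 ≤ m) :
    ∃ N : ℕ, (N : ℤ) = (m - 2) * 2 ^ (m - 1) + 1 ∧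
      Nonempty
        ((commutator (Monoid.CoprodI (fun _ : Fin m => Multiplicative (ZMod 2)))) ≃*
          FreeGroup (Fin N)) := by
  obtain ⟨n, rfl⟩ : ∃ n, m = n + 1 := ⟨m - 1, by omega⟩
  obtain ⟨e5⟩ := part5 n n (MainPart.psi' n) (MainPart.hsurj n)
  refine ⟨2 ^ n * n - (2 ^ n - 1), ?_, ?_⟩
  · rw [show n + 1 - 1 = n from rfl]
    rcases Nat.eq_zero_or_pos n with rfl | hn
    · norm_num
    · have hE : (1 : ℕ) ≤ 2 ^ n := Nat.one_le_two_pow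
      have h1 : (2 ^ n - 1 : ℕ) ≤ 2 ^ n * n :=
        le_trans (by omega) (Nat.le_mul_of_pos_right _ hn)
      push_cast [Nat.cast_sub h1, Nat.cast_sub hE]
      ring
  · exact ⟨(MainPart.equiv_comm n).trans e5⟩
end

section
/- A finitely generated free group cannot be generated by fewer elements than its rank; consequently, any generating set of a free group of rank N consisting of exactly N elements is a free basis. -/
namespace FreeGroupGenAux

variable {N : ℕ}

/-- The partial bijection used in the proof of residual finiteness of free groups,
as an equivalence between two subtypes of `Fin (n+1)`. -/
def rfEquiv (n : ℕ) (c : ℕ → Fin N × Bool)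
    (adj : ∀ k x b, k + 1 < n → c k = (x, b) → c (k + 1) = (x, !b) → False)
    (i : Fin N) :
    {j : Fin (n + 1) // (j.val < n ∧ c (n - 1 - j.val) = (i, true)) ∨
        (0 < j.val ∧ c (n - j.val) = (i, false))} ≃
    {j : Fin (n + 1) // (0 < j.val ∧ c (n - j.val) = (i, true)) ∨
        (j.val < n ∧ c (n - 1 - j.val) = (i, false))} where
  toFun x :=
    if h : x.val.val < n ∧ c (n - 1 - x.val.val) = (i, true) then
      ⟨⟨x.val.val + 1, by have := h.1; omega⟩,
        show (0 < x.val.val + 1 ∧ c (n - (x.val.val + 1)) = (i, true)) ∨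
            (x.val.val + 1 < n ∧ c (n - 1 - (x.val.val + 1)) = (i, false)) from
          Or.inl ⟨Nat.succ_pos _,
            by rw [show n - (x.val.val + 1) = n - 1 - x.val.val by have := h.1; omega]
               exact h.2⟩⟩
    else
      have hv := x.prop.resolve_left h
      ⟨⟨x.val.val - 1, by have := x.val.isLt; omega⟩,
        show (0 < x.val.val - 1 ∧ c (n - (x.val.val - 1)) = (i, true)) ∨
            (x.val.val - 1 < n ∧ c (n - 1 - (x.val.val - 1)) = (i, false)) from
          Or.inr ⟨by have := x.val.isLt; have := hv.1; omega,
            by rw [show n - 1 - (x.val.val - 1) = n - x.val.val by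
                have := x.val.isLt; have := hv.1; omega]
               exact hv.2⟩⟩
  invFun y :=
    if h : 0 < y.val.val ∧ c (n - y.val.val) = (i, true) then
      ⟨⟨y.val.val - 1, by have := y.val.isLt; omega⟩,
        show (y.val.val - 1 < n ∧ c (n - 1 - (y.val.val - 1)) = (i, true)) ∨
            (0 < y.val.val - 1 ∧ c (n - (y.val.val - 1)) = (i, false)) from
          Or.inl ⟨by have := y.val.isLt; have := h.1; omega,
            by rw [show n - 1 - (y.val.val - 1) = n - y.val.val by
                have := y.val.isLt; have := h.1; omega]
               exact h.2⟩⟩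
    else
      have hv := y.prop.resolve_left h
      ⟨⟨y.val.val + 1, by have := hv.1; omega⟩,
        show (y.val.val + 1 < n ∧ c (n - 1 - (y.val.val + 1)) = (i, true)) ∨
            (0 < y.val.val + 1 ∧ c (n - (y.val.val + 1)) = (i, false)) from
          Or.inr ⟨Nat.succ_pos _,
            by rw [show n - (y.val.val + 1) = n - 1 - y.val.val by have := hv.1; omega]
               exact hv.2⟩⟩
  left_inv x := by
    rcases x with ⟨a, hx⟩
    by_cases h : a.val < n ∧ c (n - 1 - a.val) = (i, true)
    · simp only [Fin.val_mk, dif_pos h]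
      rw [dif_pos (show 0 < a.val + 1 ∧ c (n - (a.val + 1)) = (i, true) from
        ⟨Nat.succ_pos _, by
          rw [show n - (a.val + 1) = n - 1 - a.val by have := h.1; omega]; exact h.2⟩)]
      exact Subtype.ext (Fin.ext (by simp [Fin.val_mk]))
    · have hv : 0 < a.val ∧ c (n - a.val) = (i, false) := hx.resolve_left h
      simp only [Fin.val_mk, dif_neg h]
      rw [dif_neg (show ¬(0 < a.val - 1 ∧ c (n - (a.val - 1)) = (i, true)) from by
        rintro ⟨h1, h2⟩
        exact adj (n - a.val) i false (by have := a.isLt; omega) hv.2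
          (by rw [show n - a.val + 1 = n - (a.val - 1) by have := a.isLt; omega]; exact h2))]
      exact Subtype.ext (Fin.ext (by simp [Fin.val_mk]; omega))
  right_inv y := by
    rcases y with ⟨a, hy⟩
    by_cases h : 0 < a.val ∧ c (n - a.val) = (i, true)
    · simp only [Fin.val_mk, dif_pos h]
      rw [dif_pos (show a.val - 1 < n ∧ c (n - 1 - (a.val - 1)) = (i, true) from
        ⟨by have := a.isLt; omega, by
          rw [show n - 1 - (a.val - 1) = n - a.val by have := a.isLt; have := h.1; omega]
          exact h.2⟩)]
      exact Subtype.ext (Fin.ext (by simp [Fin.val_mk]; omega))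
    · have hv : a.val < n ∧ c (n - 1 - a.val) = (i, false) := hy.resolve_left h
      simp only [Fin.val_mk, dif_neg h]
      rw [dif_neg (show ¬(a.val + 1 < n ∧ c (n - 1 - (a.val + 1)) = (i, true)) from by
        rintro ⟨h1, h2⟩
        exact adj (n - 1 - (a.val + 1)) i true (by omega) h2
          (by rw [show n - 1 - (a.val + 1) + 1 = n - 1 - a.val by omega]; exact hv.2))]
      exact Subtype.ext (Fin.ext (by simp [Fin.val_mk]))

noncomputable def rfPerm (n : ℕ) (c : ℕ → Fin N × Bool)
    (adj : ∀ k x b, k + 1 < n → c k = (x, b) → c (k + 1) = (x, !b) → False)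
    (i : Fin N) : Equiv.Perm (Fin (n + 1)) :=
  (rfEquiv n c adj i).extendSubtype

lemma rfPerm_true (n : ℕ) (c : ℕ → Fin N × Bool)
    (adj : ∀ k x b, k + 1 < n → c k = (x, b) → c (k + 1) = (x, !b) → False)
    (i : Fin N) (k : ℕ) (hk : k < n) (hc : c k = (i, true)) (a b : Fin (n + 1))
    (ha : a.val = n - 1 - k) (hb : b.val = n - k) :
    rfPerm n c adj i a = b := by
  have hc' : c (n - 1 - a.val) = (i, true) := by
    rw [ha, show n - 1 - (n - 1 - k) = k by omega]; exact hc
  have hmem : (a.val < n ∧ c (n - 1 - a.val) = (i, true)) ∨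
      (0 < a.val ∧ c (n - a.val) = (i, false)) := Or.inl ⟨by omega, hc'⟩
  rw [rfPerm, Equiv.extendSubtype_apply_of_mem (rfEquiv n c adj i) a hmem]
  have hval : ((rfEquiv n c adj i ⟨a, hmem⟩ : {j : Fin (n + 1) // _}) : Fin (n + 1)).val
      = a.val + 1 := by
    simp only [rfEquiv, Equiv.coe_fn_mk, dif_pos (show a.val < n ∧
      c (n - 1 - a.val) = (i, true) from ⟨by omega, hc'⟩)]
  exact Fin.ext (by omega)

lemma rfPerm_false (n : ℕ) (c : ℕ → Fin N × Bool)
    (adj : ∀ k x b, k + 1 < n → c k = (x, b) → c (k + 1) = (x, !b) → False)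
    (i : Fin N) (k : ℕ) (hk : k < n) (hc : c k = (i, false)) (a b : Fin (n + 1))
    (ha : a.val = n - k) (hb : b.val = n - 1 - k) :
    rfPerm n c adj i a = b := by
  have hc' : c (n - a.val) = (i, false) := by
    rw [ha, show n - (n - k) = k by omega]; exact hc
  have hnot : ¬(a.val < n ∧ c (n - 1 - a.val) = (i, true)) := by
    rintro ⟨h1, h2⟩
    refine adj (n - 1 - a.val) i true (by omega) h2 ?_
    rw [show n - 1 - a.val + 1 = n - a.val by omega]
    exact hc'
  have hmem : (a.val < n ∧ c (n - 1 - a.val) = (i, true)) ∨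
      (0 < a.val ∧ c (n - a.val) = (i, false)) := Or.inr ⟨by omega, hc'⟩
  rw [rfPerm, Equiv.extendSubtype_apply_of_mem (rfEquiv n c adj i) a hmem]
  have hval : ((rfEquiv n c adj i ⟨a, hmem⟩ : {j : Fin (n + 1) // _}) : Fin (n + 1)).val
      = a.val - 1 := by
    simp only [rfEquiv, Equiv.coe_fn_mk, dif_neg hnot]
  exact Fin.ext (by omega)


lemma exists_perm_hom {N : ℕ} (w : FreeGroup (Fin N)) (hw : w ≠ 1) :
    ∃ (n : ℕ) (f : FreeGroup (Fin N) →* Equiv.Perm (Fin (n + 1))), f w ≠ 1 := by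
  classical
  set L := w.toWord with hLdef
  set n := L.length with hndef
  have hL : FreeGroup.reduce L = L := w.reduce_toWord
  have hn : 0 < n := by
    rw [hndef, List.length_pos_iff]
    simpa [hLdef, FreeGroup.toWord_eq_nil_iff] using hw
  set d : Fin N × Bool := L.get ⟨0, hn⟩ with hd
  set c : ℕ → Fin N × Bool := fun k => L.getD k d with hc
  have hck : ∀ k (h : k < n), c k = L[k] := fun k h => List.getD_eq_getElem L d h
  have adj : ∀ k x b, k + 1 < n → c k = (x, b) → c (k + 1) = (x, !b) → False := by
    intro k x b hk h1 h2
    rw [hck k (by omega)] at h1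
    rw [hck (k + 1) (by omega)] at h2
    have e1 : L = L.take k ++ ((x, b) :: ((x, !b) :: L.drop (k + 2))) := by
      conv_lhs => rw [← List.take_append_drop k L]
      rw [List.drop_eq_getElem_cons (by omega : k < L.length),
        List.drop_eq_getElem_cons (by omega : k + 1 < L.length), h1, h2]
    exact FreeGroup.reduce.not (p := False) (hL.trans e1)

  refine ⟨n, FreeGroup.lift (rfPerm n c adj), ?_⟩
  have main : ∀ m (hm : m ≤ n),
      (((L.drop (n - m)).map fun x =>
          cond x.2 (rfPerm n c adj x.1) (rfPerm n c adj x.1)⁻¹).prod)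
        ⟨0, by omega⟩ = ⟨m, by omega⟩ := by
    intro m
    induction m with
    | zero =>
      intro _
      have hdrop : L.drop (n - 0) = [] := by
        rw [Nat.sub_zero, hndef]; simp
      rw [hdrop]
      simp
    | succ m ih =>
      intro hm
      have hdrop : L.drop (n - (m + 1)) = L[n - (m + 1)]'(by omega) :: L.drop (n - m) := by
        rw [List.drop_eq_getElem_cons (by omega : n - (m + 1) < L.length),
          show n - (m + 1) + 1 = n - m by omega]
      rw [hdrop, List.map_cons, List.prod_cons, Equiv.Perm.mul_apply, ih (by omega)]
      have hckk := hck (n - (m + 1)) (by omega)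
      rcases hxb : c (n - (m + 1)) with ⟨x, b⟩
      rw [← hckk, hxb]
      cases b with
      | true =>
        show rfPerm n c adj x ⟨m, by omega⟩ = ⟨m + 1, by omega⟩
        exact rfPerm_true n c adj x (n - (m + 1)) (by omega) hxb _ _
          (by rw [Fin.val_mk]; omega) (by rw [Fin.val_mk]; omega)
      | false =>
        show (rfPerm n c adj x)⁻¹ ⟨m, by omega⟩ = ⟨m + 1, by omega⟩
        have hs := rfPerm_false n c adj x (n - (m + 1)) (by omega) hxb
          ⟨m + 1, by omega⟩ ⟨m, by omega⟩
          (by rw [Fin.val_mk]; omega) (by rw [Fin.val_mk]; omega)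
        rw [← hs, Equiv.Perm.inv_def, Equiv.symm_apply_apply]
  intro hone
  have hlift : FreeGroup.lift (rfPerm n c adj) w
      = (L.map fun x => cond x.2 (rfPerm n c adj x.1) (rfPerm n c adj x.1)⁻¹).prod := by
    conv_lhs => rw [← FreeGroup.mk_toWord (x := w)]
    exact FreeGroup.lift_mk
  have h0 := main n le_rfl
  rw [Nat.sub_self, List.drop_zero] at h0
  rw [← hlift, hone] at h0
  have : (0 : ℕ) = n := (by simpa using h0 : n = 0).symm
  omega

lemma hopf {N : ℕ} (φ : FreeGroup (Fin N) →* FreeGroup (Fin N))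
    (hφ : Function.Surjective φ) : Function.Injective φ := by
  rw [injective_iff_map_eq_one φ]
  intro w h1
  by_contra hw
  obtain ⟨n, f, hf⟩ := exists_perm_hom w hw
  haveI : Fintype (FreeGroup (Fin N) →* Equiv.Perm (Fin (n + 1))) :=
    Fintype.ofEquiv _ FreeGroup.lift
  have hinj : Function.Injective
      (fun g : FreeGroup (Fin N) →* Equiv.Perm (Fin (n + 1)) => g.comp φ) := by
    intro g1 g2 h
    apply MonoidHom.ext
    intro x
    obtain ⟨y, rfl⟩ := hφ x
    exact DFunLike.congr_fun h y
  obtain ⟨g, hg⟩ := Finite.injective_iff_surjective.mp hinj f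
  have hg' : g.comp φ = f := hg
  have : f w = 1 := by
    rw [← hg', MonoidHom.comp_apply, h1, map_one]
  exact hf this

end FreeGroupGenAux



/-- A free group of rank `N` cannot be generated by fewer than `N` elements, and any
generating set consisting of exactly `N` elements is a free basis (i.e. the induced map
from the free group on that set is an isomorphism). -/
theorem free_group_generators (N : ℕ) :
    (∀ T : Finset (FreeGroup (Fin N)),
        Subgroup.closure (T : Set (FreeGroup (Fin N))) = ⊤ → N ≤ T.card) ∧
    (∀ S : Finset (FreeGroup (Fin N)),
        Subgroup.closure (S : Set (FreeGroup (Fin N))) = ⊤ → S.card = N →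
          Function.Bijective
            (FreeGroup.lift (fun s : (S : Set (FreeGroup (Fin N))) =>
              (s : FreeGroup (Fin N))))) := by
  constructor
  · -- lower bound on size of generating sets, via the abelianization mod 2
    intro T hT
    classical
    set π := FreeGroup.lift (fun i : Fin N =>
      Multiplicative.ofAdd (Pi.single i (1 : ZMod 2))) with hπ
    have hπs : Function.Surjective π := by
      rw [← MonoidHom.range_eq_top, hπ, FreeGroup.range_lift_eq_closure, eq_top_iff]
      rintro v -
      have hv : v = ∏ i : Fin N,
          (Multiplicative.ofAdd (Pi.single i (1 : ZMod 2))) ^ ((Multiplicative.toAdd v) i).val := by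
        have hfac : ∀ i : Fin N,
            (Multiplicative.ofAdd (Pi.single i (1 : ZMod 2) : Fin N → ZMod 2))
              ^ ((Multiplicative.toAdd v) i).val
            = Multiplicative.ofAdd ((Pi.single i ((Multiplicative.toAdd v) i) : Fin N → ZMod 2)) := by
          intro i
          rw [← ofAdd_nsmul]
          congr 1
          rw [← Pi.single_smul]
          rw [nsmul_eq_mul, mul_one]
          rw [ZMod.natCast_rightInverse (Multiplicative.toAdd v i)]
        rw [Finset.prod_congr rfl (fun i _ => hfac i), ← ofAdd_sum,
          Finset.univ_sum_single, ofAdd_toAdd]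
      rw [hv]
      exact Subgroup.prod_mem _ (fun i _ =>
        Subgroup.pow_mem _ (Subgroup.subset_closure (Set.mem_range_self i)) _)
    have hclos : Subgroup.closure (π '' ↑T) = ⊤ := by
      rw [← MonoidHom.map_closure, hT, ← MonoidHom.range_eq_map]
      exact MonoidHom.range_eq_top.mpr hπs
    set A : Set (Fin N → ZMod 2) := Multiplicative.toAdd '' (π '' ↑T) with hA
    have hspan : Submodule.span (ZMod 2) A = ⊤ := by
      rw [eq_top_iff]
      rintro v -
      have hv : Multiplicative.ofAdd v ∈ Subgroup.closure (π '' ↑T) := by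
        rw [hclos]; exact Subgroup.mem_top _
      have := Subgroup.closure_induction
        (p := fun x _ => Multiplicative.toAdd x ∈ Submodule.span (ZMod 2) A)
        (fun x hx => Submodule.subset_span ⟨x, hx, rfl⟩)
        (by simp)
        (fun x y _ _ px py => by simpa using Submodule.add_mem _ px py)
        (fun x _ px => by simpa using Submodule.neg_mem _ px) hv
      simpa using this
    have hAfin : A = ↑(T.image fun g => Multiplicative.toAdd (π g)) := by
      rw [hA, Finset.coe_image, Set.image_image]
    have h1 : Set.finrank (ZMod 2) A ≤ T.card := by
      rw [hAfin]
      exact le_trans (finrank_span_finset_le_card _) Finset.card_image_le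
    have h2 : Set.finrank (ZMod 2) A = N := by
      rw [Set.finrank, hspan, finrank_top, Module.finrank_pi, Fintype.card_fin]
    omega
  · -- a generating set of size N is a basis
    intro S hS hcard
    set ψ := FreeGroup.lift (fun s : (S : Set (FreeGroup (Fin N))) =>
      (s : FreeGroup (Fin N))) with hψ
    have hsurj : Function.Surjective ψ := by
      rw [← MonoidHom.range_eq_top, hψ, FreeGroup.range_lift_eq_closure]
      rw [Subtype.range_coe]
      exact hS
    have e : (S : Set (FreeGroup (Fin N))) ≃ Fin N :=
      (Equiv.subtypeEquivRight (fun x => Finset.mem_coe)).trans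
        (Finset.equivFinOfCardEq hcard)
    have hφs : Function.Surjective
        (ψ.comp (FreeGroup.freeGroupCongr e).symm.toMonoidHom) :=
      hsurj.comp (FreeGroup.freeGroupCongr e).symm.surjective
    have hφi := FreeGroupGenAux.hopf _ hφs
    refine ⟨?_, hsurj⟩
    intro x y hxy
    have h2 : (ψ.comp (FreeGroup.freeGroupCongr e).symm.toMonoidHom)
          ((FreeGroup.freeGroupCongr e) x)
        = (ψ.comp (FreeGroup.freeGroupCongr e).symm.toMonoidHom)
          ((FreeGroup.freeGroupCongr e) y) := by
      simp only [MonoidHom.comp_apply, MulEquiv.coe_toMonoidHom,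
        MulEquiv.symm_apply_apply]
      exact hxy
    exact (FreeGroup.freeGroupCongr e).injective (hφi h2)
end

section
/- A graph is chordal (every cycle of length at least 4 has a chord) if and only if its vertices admit a perfect elimination ordering, i.e. an ordering such that for each vertex i, the neighbours of i that precede i in the ordering form a clique. -/
/-- A graph is chordal if every cycle with at least 4 vertices has a chord: an edge of the
graph joining two vertices of the cycle that are not adjacent in the cycle. -/
def IsChordal {V : Type*} (Γ : SimpleGraph V) : Prop :=
  ∀ (v : V) (c : Γ.Walk v v), c.IsCycle → 4 ≤ c.length →
    ∃ u w : V, u ∈ c.support ∧ w ∈ c.support ∧ Γ.Adj u w ∧ s(u, w) ∉ c.edges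

/-- An ordering of the vertices (given by a bijection with `Fin (card V)`) is a perfect
elimination ordering if for each vertex `i` the lesser neighbours of `i` form a clique. -/
def IsPerfectEliminationOrdering {V : Type*} [Fintype V] (Γ : SimpleGraph V)
    (f : V ≃ Fin (Fintype.card V)) : Prop :=
  ∀ i u w : V, Γ.Adj i u → Γ.Adj i w → f u < f i → f w < f i → u ≠ w → Γ.Adj u w

namespace ChordalAux
open SimpleGraph Walk

variable {V : Type*}

lemma getVert_eq_support_getElem {Γ : SimpleGraph V} {a b : V} (p : Γ.Walk a b) {i : ℕ}
    (h : i < p.support.length) : p.support[i] = p.getVert i := by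
  induction p generalizing i with
  | nil => simp_all [Walk.getVert]
  | cons hadj q ih =>
    cases i with
    | zero => simp [Walk.getVert]
    | succ n =>
      simp only [Walk.support_cons, List.getElem_cons_succ, Walk.getVert_cons_succ]
      exact ih (by simp [Walk.length_support] at h ⊢; omega)

lemma length_rotate {Γ : SimpleGraph V} [DecidableEq V] {a u : V} (c : Γ.Walk a a)
    (h : u ∈ c.support) : (c.rotate u h).length = c.length := by
  rw [Walk.rotate, Walk.length_append, add_comm, ← Walk.length_append, Walk.take_spec]

/-- getVert is injective on indices 1..length for a cycle. -/
lemma cycle_getVert_inj {Γ : SimpleGraph V} {a : V} {c : Γ.Walk a a} (hc : c.IsCycle)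
    {i j : ℕ} (hi1 : 1 ≤ i) (hi2 : i ≤ c.length) (hj1 : 1 ≤ j) (hj2 : j ≤ c.length)
    (h : c.getVert i = c.getVert j) : i = j := by
  have hlen : c.support.length = c.length + 1 := c.length_support
  have hi : i < c.support.length := by omega
  have hj : j < c.support.length := by omega
  rw [← getVert_eq_support_getElem c hi, ← getVert_eq_support_getElem c hj] at h
  have htail : c.support.tail.Nodup := hc.support_nodup
  have hs : c.support = a :: c.support.tail := c.support_eq_cons
  obtain ⟨i, rfl⟩ : ∃ i', i = i' + 1 := ⟨i - 1, by omega⟩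
  obtain ⟨j, rfl⟩ : ∃ j', j = j' + 1 := ⟨j - 1, by omega⟩
  have hti : i < c.support.tail.length := by
    have := c.support.length_tail; omega
  have htj : j < c.support.tail.length := by
    have := c.support.length_tail; omega
  have h' : c.support.tail[i] = c.support.tail[j] := by
    rw [List.getElem_tail, List.getElem_tail]
    exact h
  have := (htail.getElem_inj_iff (hi := hti) (hj := htj)).mp h'
  omega

lemma IsChordal.induce {Γ : SimpleGraph V} (h : IsChordal Γ) (s : Set V) :
    IsChordal (Γ.induce s) := by
  intro v c hc hl
  classical
  have hinj : Function.Injective (SimpleGraph.Embedding.induce (G := Γ) s).toHom := by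
    intro x y hxy
    exact Subtype.ext hxy
  set f := (SimpleGraph.Embedding.induce (G := Γ) s).toHom with hf
  have hcmap : (c.map f).IsCycle := (Walk.map_isCycle_iff_of_injective hinj).mpr hc
  obtain ⟨u, w, hu, hw, hadj, he⟩ := h (f v) (c.map f) hcmap (by rwa [Walk.length_map])
  rw [Walk.support_map, List.mem_map] at hu hw
  obtain ⟨u', hu', rfl⟩ := hu
  obtain ⟨w', hw', rfl⟩ := hw
  refine ⟨u', w', hu', hw', hadj, fun hmem => he ?_⟩
  rw [Walk.edges_map]
  exact List.mem_map.mpr ⟨s(u', w'), hmem, by simp [Sym2.map_pair_eq]⟩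

variable {Γ : SimpleGraph V}


def IsSimplicial (Γ : SimpleGraph V) (v : V) : Prop :=
  ∀ u w, Γ.Adj v u → Γ.Adj v w → u ≠ w → Γ.Adj u w

def Separates (Γ : SimpleGraph V) (a b : V) (S : Finset V) : Prop :=
  a ∉ S ∧ b ∉ S ∧ ∀ p : Γ.Walk a b, ∃ z ∈ p.support, z ∈ S

def side (Γ : SimpleGraph V) (S : Finset V) (a : V) : Set V :=
  {x | ∃ p : Γ.Walk a x, ∀ z ∈ p.support, z ∉ S}

variable {Γ : SimpleGraph V} {S : Finset V} {a b : V}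

lemma mem_side_self (h : a ∉ S) : a ∈ side Γ S a :=
  ⟨Walk.nil, by simp [h]⟩

lemma side_not_mem {x : V} (hx : x ∈ side Γ S a) : x ∉ S := by
  obtain ⟨p, hp⟩ := hx
  exact hp x p.end_mem_support

lemma side_adj {x y : V} (hx : x ∈ side Γ S a) (hadj : Γ.Adj x y) (hy : y ∉ S) :
    y ∈ side Γ S a := by
  obtain ⟨p, hp⟩ := hx
  refine ⟨p.concat hadj, ?_⟩
  intro z hz
  rw [Walk.support_concat, List.mem_append] at hz
  rcases hz with hz | hz
  · exact hp z hz
  · simp at hz; subst hz; exact hy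

lemma side_subset_of_walk [DecidableEq V] {x : V} (p : Γ.Walk a x)
    (hp : ∀ z ∈ p.support, z ∉ S) : ∀ z ∈ p.support, z ∈ side Γ S a := by
  intro z hz
  exact ⟨p.takeUntil z hz, fun y hy => hp y (p.support_takeUntil_subset hz hy)⟩

lemma side_disjoint (hsep : Separates Γ a b S) {x : V}
    (hxa : x ∈ side Γ S a) (hxb : x ∈ side Γ S b) : False := by
  obtain ⟨p, hp⟩ := hxa
  obtain ⟨q, hq⟩ := hxb
  obtain ⟨z, hz, hzS⟩ := hsep.2.2 (p.append q.reverse)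
  rw [Walk.mem_support_append_iff] at hz
  rcases hz with hz | hz
  · exact hp z hz hzS
  · rw [Walk.support_reverse, List.mem_reverse] at hz
    exact hq z hz hzS

lemma side_adj_disjoint (hsep : Separates Γ a b S) {x y : V}
    (hxa : x ∈ side Γ S a) (hyb : y ∈ side Γ S b) : ¬ Γ.Adj x y := by
  intro hadj
  exact side_disjoint hsep (side_adj hxa hadj (side_not_mem hyb)) hyb

lemma first_hit {x y : V} (p : Γ.Walk x y) (hx : x ∈ side Γ S a) (hy : y ∉ side Γ S a) :
    ∃ t ∈ S, t ∈ p.support ∧ ∃ z ∈ side Γ S a, Γ.Adj z t := by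
  induction p with
  | nil => exact absurd hx hy
  | @cons u v w hadj q ih =>
    by_cases hv : v ∈ S
    · exact ⟨v, hv, by simp [q.start_mem_support], u, hx, hadj⟩
    · obtain ⟨t, ht, hts, hz⟩ := ih (side_adj hx hadj hv) hy
      exact ⟨t, ht, by simp [hts], hz⟩

lemma exists_separator [Fintype V] [DecidableEq V] (hne : a ≠ b) (hnadj : ¬ Γ.Adj a b) :
    ∃ S : Finset V, Separates Γ a b S := by
  classical
  refine ⟨Finset.univ.filter (fun x => x ≠ a ∧ x ≠ b), by simp, by simp [hne.symm], ?_⟩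
  intro p
  set q := p.bypass with hq
  have hqp : q.IsPath := p.bypass_isPath
  have hq1 : q.getVert 1 ∈ q.support := by
    rw [Walk.mem_support_iff_exists_getVert]
    refine ⟨1, rfl, ?_⟩
    by_contra hlen
    push_neg at hlen
    have h0 : q.length = 0 := by omega
    have := q.getVert_length
    rw [h0, q.getVert_zero] at this
    exact hne this
  have hlen : 1 ≤ q.length := by
    by_contra hl
    push_neg at hl
    have h0 : q.length = 0 := by omega
    have := q.getVert_length
    rw [h0, q.getVert_zero] at this
    exact hne this
  have hadj1 : Γ.Adj a (q.getVert 1) := by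
    have := q.adj_getVert_succ (i := 0) (by omega)
    rwa [q.getVert_zero] at this
  refine ⟨q.getVert 1, p.support_bypass_subset hq1, ?_⟩
  simp only [Finset.mem_filter, Finset.mem_univ, true_and]
  refine ⟨hadj1.ne', fun hb => hnadj (hb ▸ hadj1)⟩

lemma exists_min_separator [Fintype V] [DecidableEq V] (hne : a ≠ b) (hnadj : ¬ Γ.Adj a b) :
    ∃ S : Finset V, Separates Γ a b S ∧ ∀ T, Separates Γ a b T → S.card ≤ T.card := by
  classical
  obtain ⟨S₀, hS₀⟩ := exists_separator hne hnadj
  obtain ⟨S, hS, hmin⟩ := Finset.exists_min_image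
    (Finset.univ.filter (fun T => Separates Γ a b T)) Finset.card
    ⟨S₀, by simp [hS₀]⟩
  simp only [Finset.mem_filter, Finset.mem_univ, true_and] at hS hmin
  exact ⟨S, hS, fun T hT => hmin T (by simp [hT])⟩

lemma min_separator_side_adj [Fintype V] [DecidableEq V]
    (hsep : Separates Γ a b S) (hmin : ∀ T, Separates Γ a b T → S.card ≤ T.card)
    {s : V} (hs : s ∈ S) : ∃ x ∈ side Γ S a, Γ.Adj x s := by
  by_contra hno
  push_neg at hno
  have hsep' : Separates Γ a b (S.erase s) := by
    refine ⟨fun h => hsep.1 (Finset.mem_of_mem_erase h),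
           fun h => hsep.2.1 (Finset.mem_of_mem_erase h), ?_⟩
    intro p
    have hb : b ∉ side Γ S a := fun h => side_disjoint hsep h (mem_side_self hsep.2.1)
    obtain ⟨t, htS, htp, z, hz, hadj⟩ := first_hit p (mem_side_self hsep.1) hb
    have hts : t ≠ s := fun h => hno z hz (h ▸ hadj)
    exact ⟨t, htp, Finset.mem_erase.mpr ⟨hts, htS⟩⟩
  have := hmin _ hsep'
  have := Finset.card_erase_lt_of_mem hs
  omega



lemma getVert_takeUntil_length [DecidableEq V] {s t : V} (q : Γ.Walk s t)
    {x : V} (hx : x ∈ q.support) : q.getVert (q.takeUntil x hx).length = x := by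
  obtain ⟨k, hk⟩ : ∃ k, (q.takeUntil x hx).length = k := ⟨_, rfl⟩
  rw [hk]
  conv_lhs => rw [← Walk.take_spec q hx]
  rw [Walk.getVert_append, hk]
  simp

lemma edge_mem_of_getVert {s t : V} (q : Γ.Walk s t) {i : ℕ} (hi : i < q.length) :
    s(q.getVert i, q.getVert (i + 1)) ∈ q.edges := by
  rw [← Walk.mem_edges_toSubgraph, Subgraph.mem_edgeSet]
  exact q.toSubgraph_adj_getVert hi

/-- On a minimum-length walk within a vertex set `X`, adjacent support
vertices must actually be joined by an edge of the walk. -/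
lemma shortcut [DecidableEq V] {s t : V} {X : Set V} {q : Γ.Walk s t}
    (hmin : ∀ q' : Γ.Walk s t, (∀ z ∈ q'.support, z ∈ X) → q.length ≤ q'.length)
    (hX : ∀ z ∈ q.support, z ∈ X)
    {u w : V} (hu : u ∈ q.support) (hw : w ∈ q.support) (hadj : Γ.Adj u w) :
    s(u, w) ∈ q.edges := by
  have short : ∀ (x y : V) (hx : x ∈ q.support) (hy : y ∈ q.support), Γ.Adj x y →
      (q.takeUntil x hx).length + 2 ≤ (q.takeUntil y hy).length → False := by
    intro x y hx hy hxy hlt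
    set n : Γ.Walk s t := (q.takeUntil x hx).append (Walk.cons hxy (q.dropUntil y hy)) with hn
    have hnX : ∀ z ∈ n.support, z ∈ X := by
      intro z hz
      rw [hn, Walk.mem_support_append_iff] at hz
      rcases hz with hz | hz
      · exact hX z (q.support_takeUntil_subset hx hz)
      · rw [Walk.support_cons, List.mem_cons] at hz
        rcases hz with rfl | hz
        · exact hX z hx
        · exact hX z (q.support_dropUntil_subset hy hz)
    have hlen : n.length = (q.takeUntil x hx).length + 1 + (q.dropUntil y hy).length := by
      rw [hn, Walk.length_append, Walk.length_cons]
      omega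
    have hsplit : (q.takeUntil y hy).length + (q.dropUntil y hy).length = q.length := by
      have := congrArg Walk.length (Walk.take_spec q hy)
      rwa [Walk.length_append] at this
    have := hmin n hnX
    omega
  -- positions of u and w
  set i := (q.takeUntil u hu).length with hi
  set j := (q.takeUntil w hw).length with hj
  have hgu : q.getVert i = u := getVert_takeUntil_length q hu
  have hgw : q.getVert j = w := getVert_takeUntil_length q hw
  have hij : i ≠ j := by
    intro h
    apply hadj.ne
    rw [← hgu, ← hgw, h]
  have hjq : j ≤ q.length := q.length_takeUntil_le hw
  have hiq : i ≤ q.length := q.length_takeUntil_le hu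
  rcases Nat.lt_or_ge i j with hlt | hge
  · have hj1 : j = i + 1 := by
      by_contra hne
      exact short u w hu hw hadj (by omega)
    rw [hj1] at hgw
    have := edge_mem_of_getVert q (i := i) (by omega)
    rwa [hgu, hgw] at this
  · have hlt : j < i := by omega
    have hi1 : i = j + 1 := by
      by_contra hne
      exact short w u hw hu hadj.symm (by omega)
    rw [hi1] at hgu
    have := edge_mem_of_getVert q (i := j) (by omega)
    rw [hgw, hgu] at this
    rwa [Sym2.eq_swap]


lemma sep_symm (h : Separates Γ a b S) : Separates Γ b a S := by
  refine ⟨h.2.1, h.1, fun p => ?_⟩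
  obtain ⟨z, hz, hzS⟩ := h.2.2 p.reverse
  rw [Walk.support_reverse, List.mem_reverse] at hz
  exact ⟨z, hz, hzS⟩

lemma exists_min_path [DecidableEq V] {c s t : V}
    (hst : s ≠ t) (hnadj : ¬ Γ.Adj s t)
    (hx : ∃ x ∈ side Γ S c, Γ.Adj x s) (hy : ∃ y ∈ side Γ S c, Γ.Adj y t) :
    ∃ q : Γ.Walk s t, q.IsPath ∧ (∀ z ∈ q.support, z = s ∨ z = t ∨ z ∈ side Γ S c) ∧
      2 ≤ q.length ∧
      ∀ q' : Γ.Walk s t, (∀ z ∈ q'.support, z = s ∨ z = t ∨ z ∈ side Γ S c) →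
        q.length ≤ q'.length := by
  classical
  obtain ⟨x, hxA, hxs⟩ := hx
  obtain ⟨y, hyA, hyt⟩ := hy
  obtain ⟨px, hpx⟩ := hxA
  obtain ⟨py, hpy⟩ := hyA
  have hexists : ∃ n, ∃ q : Γ.Walk s t,
      (∀ z ∈ q.support, z = s ∨ z = t ∨ z ∈ side Γ S c) ∧ q.length = n := by
    refine ⟨_, Walk.cons hxs.symm ((px.reverse.append py).concat hyt), ?_, rfl⟩
    intro z hz
    rw [Walk.support_cons, List.mem_cons] at hz
    rcases hz with rfl | hz
    · exact Or.inl rfl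
    rw [Walk.support_concat, List.mem_append] at hz
    rcases hz with hz | hz
    · rw [Walk.mem_support_append_iff] at hz
      right; right
      rcases hz with hz | hz
      · rw [Walk.support_reverse, List.mem_reverse] at hz
        exact side_subset_of_walk px hpx z hz
      · exact side_subset_of_walk py hpy z hz
    · simp only [List.mem_singleton] at hz; subst hz; exact Or.inr (Or.inl rfl)
  obtain ⟨q₀, hq₀X, hq₀n⟩ := Nat.find_spec hexists
  have hbyX : ∀ z ∈ q₀.bypass.support, z = s ∨ z = t ∨ z ∈ side Γ S c :=
    fun z hz => hq₀X z (q₀.support_bypass_subset hz)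
  have hmin : ∀ q' : Γ.Walk s t, (∀ z ∈ q'.support, z = s ∨ z = t ∨ z ∈ side Γ S c) →
      q₀.bypass.length ≤ q'.length := by
    intro q' hq'
    calc q₀.bypass.length ≤ q₀.length := q₀.length_bypass_le
    _ = Nat.find hexists := hq₀n
    _ ≤ q'.length := Nat.find_min' hexists ⟨q', hq', rfl⟩
  have hlen2 : 2 ≤ q₀.bypass.length := by
    by_contra hl
    push_neg at hl
    have hgl := q₀.bypass.getVert_length
    rcases (by omega : q₀.bypass.length = 0 ∨ q₀.bypass.length = 1) with h | h
    · rw [h, Walk.getVert_zero] at hgl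
      exact hst hgl
    · have hadj := q₀.bypass.adj_getVert_succ (i := 0) (by omega)
      rw [Walk.getVert_zero] at hadj
      rw [h] at hgl
      rw [hgl] at hadj
      exact hnadj hadj
  exact ⟨q₀.bypass, q₀.bypass_isPath, hbyX, hlen2, hmin⟩

lemma min_separator_clique [Fintype V] [DecidableEq V]
    (hch : IsChordal Γ) (hsep : Separates Γ a b S)
    (hmin : ∀ T, Separates Γ a b T → S.card ≤ T.card)
    {s t : V} (hs : s ∈ S) (ht : t ∈ S) (hst : s ≠ t) : Γ.Adj s t := by
  classical
  by_contra hnadj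
  obtain ⟨q₁, hq₁path, hq₁X, hq₁len, hq₁min⟩ :=
    exists_min_path (c := a) hst hnadj
      (min_separator_side_adj hsep hmin hs) (min_separator_side_adj hsep hmin ht)
  have hsep' := sep_symm hsep
  have hmin' : ∀ T, Separates Γ b a T → S.card ≤ T.card := fun T hT => hmin T (sep_symm hT)
  obtain ⟨q₂, hq₂path, hq₂X, hq₂len, hq₂min⟩ :=
    exists_min_path (c := b) hst hnadj
      (min_separator_side_adj hsep' hmin' hs) (min_separator_side_adj hsep' hmin' ht)
  set A := side Γ S a with hA
  set B := side Γ S b with hB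
  have hsA : s ∉ A := fun h => side_not_mem h hs
  have htA : t ∉ A := fun h => side_not_mem h ht
  have hsB : s ∉ B := fun h => side_not_mem h hs
  have htB : t ∉ B := fun h => side_not_mem h ht
  have hAB : ∀ z, z ∈ A → z ∈ B → False := fun z h1 h2 => side_disjoint hsep h1 h2
  set cw : Γ.Walk s s := q₁.append q₂.reverse with hcw
  -- membership facts
  have hmemc : ∀ z, z ∈ cw.support ↔ z ∈ q₁.support ∨ z ∈ q₂.support := by
    intro z
    rw [hcw, Walk.mem_support_append_iff, Walk.support_reverse, List.mem_reverse]
  -- edges disjoint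
  have hedisj : ∀ e ∈ q₁.edges, e ∉ q₂.edges := by
    intro e he1 he2
    induction e with
    | _ x y =>
      have hx1 := q₁.fst_mem_support_of_mem_edges he1
      have hy1 := q₁.snd_mem_support_of_mem_edges he1
      have hx2 := q₂.fst_mem_support_of_mem_edges he2
      have hy2 := q₂.snd_mem_support_of_mem_edges he2
      have hadjxy : Γ.Adj x y := q₁.edges_subset_edgeSet he1
      have hxst : x = s ∨ x = t := by
        rcases hq₁X x hx1 with rfl | rfl | h1
        · exact Or.inl rfl
        · exact Or.inr rfl
        · rcases hq₂X x hx2 with rfl | rfl | h2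
          · exact absurd h1 hsA
          · exact absurd h1 htA
          · exact (hAB x h1 h2).elim
      have hyst : y = s ∨ y = t := by
        rcases hq₁X y hy1 with rfl | rfl | h1
        · exact Or.inl rfl
        · exact Or.inr rfl
        · rcases hq₂X y hy2 with rfl | rfl | h2
          · exact absurd h1 hsA
          · exact absurd h1 htA
          · exact (hAB y h1 h2).elim
      rcases hxst with rfl | rfl <;> rcases hyst with rfl | rfl
      · exact hadjxy.ne rfl
      · exact hnadj hadjxy
      · exact hnadj hadjxy.symm
      · exact hadjxy.ne rfl
  -- the cycle
  have htrail : cw.IsTrail := by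
    constructor
    rw [hcw, Walk.edges_append, Walk.edges_reverse]
    refine List.Nodup.append hq₁path.isTrail.edges_nodup
      (List.nodup_reverse.mpr hq₂path.isTrail.edges_nodup) ?_
    intro e he1 he2
    rw [List.mem_reverse] at he2
    exact hedisj e he1 he2
  have hcnenil : cw ≠ Walk.nil := by
    intro h
    have := congrArg Walk.length h
    rw [hcw, Walk.length_append, Walk.length_reverse] at this
    simp only [Walk.length_nil] at this
    omega
  have hq₁tail : ∀ z ∈ q₁.support.tail, z ≠ s ∧ z ∈ q₁.support := by
    intro z hz
    have hnodup := hq₁path.support_nodup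
    rw [q₁.support_eq_cons, List.nodup_cons] at hnodup
    exact ⟨fun h => hnodup.1 (h ▸ hz), by rw [q₁.support_eq_cons]; exact List.mem_cons_of_mem _ hz⟩
  have hq₂rtail : ∀ z ∈ q₂.reverse.support.tail, z ≠ t ∧ z ∈ q₂.support := by
    intro z hz
    have hnodup := hq₂path.reverse.support_nodup
    rw [q₂.reverse.support_eq_cons, List.nodup_cons] at hnodup
    refine ⟨fun h => hnodup.1 (h ▸ hz), ?_⟩
    have : z ∈ q₂.reverse.support := by
      rw [q₂.reverse.support_eq_cons]; exact List.mem_cons_of_mem _ hz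
    rwa [Walk.support_reverse, List.mem_reverse] at this
  have hsupnodup : cw.support.tail.Nodup := by
    have hteq : cw.support.tail = q₁.support.tail ++ q₂.reverse.support.tail := by
      rw [hcw, Walk.support_append, q₁.support_eq_cons]
      simp
    rw [hteq]
    refine List.Nodup.append (hq₁path.support_nodup.sublist (List.tail_sublist _))
      (hq₂path.reverse.support_nodup.sublist (List.tail_sublist _)) ?_
    intro z hz1 hz2
    obtain ⟨hzs, hz1'⟩ := hq₁tail z hz1
    obtain ⟨hzt, hz2'⟩ := hq₂rtail z hz2
    rcases hq₁X z hz1' with h | h | h1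
    · exact hzs h
    · exact hzt h
    · rcases hq₂X z hz2' with h | h | h2
      · exact hsA (h ▸ h1)
      · exact htA (h ▸ h1)
      · exact hAB z h1 h2
  have hcyc : cw.IsCycle := ⟨⟨htrail, hcnenil⟩, hsupnodup⟩
  have hclen : 4 ≤ cw.length := by
    rw [hcw, Walk.length_append, Walk.length_reverse]
    omega
  obtain ⟨u, w, hu, hw, hadj, hne⟩ := hch s cw hcyc hclen
  -- final case analysis
  have hin1 : ∀ z ∈ cw.support, z = s ∨ z = t ∨ z ∈ A → z ∈ q₁.support := by
    intro z hz hcls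
    rcases (hmemc z).mp hz with h | h
    · exact h
    · rcases hcls with rfl | rfl | h1
      · exact q₁.start_mem_support
      · exact q₁.end_mem_support
      · rcases hq₂X z h with rfl | rfl | h2
        · exact absurd h1 hsA
        · exact absurd h1 htA
        · exact (hAB z h1 h2).elim
  have hin2 : ∀ z ∈ cw.support, z = s ∨ z = t ∨ z ∈ B → z ∈ q₂.support := by
    intro z hz hcls
    rcases (hmemc z).mp hz with h | h
    · rcases hcls with rfl | rfl | h2
      · exact q₂.start_mem_support
      · exact q₂.end_mem_support
      · rcases hq₁X z h with rfl | rfl | h1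
        · exact absurd h2 hsB
        · exact absurd h2 htB
        · exact (hAB z h1 h2).elim
    · exact h
  have done1 : u ∈ q₁.support → w ∈ q₁.support → False := by
    intro hu1 hw1
    have := shortcut hq₁min hq₁X hu1 hw1 hadj
    apply hne
    rw [hcw, Walk.edges_append]
    exact List.mem_append_left _ this
  have done2 : u ∈ q₂.support → w ∈ q₂.support → False := by
    intro hu2 hw2
    have := shortcut hq₂min hq₂X hu2 hw2 hadj
    apply hne
    rw [hcw, Walk.edges_append, Walk.edges_reverse]
    exact List.mem_append_right _ (List.mem_reverse.mpr this)
  have hucls : u = s ∨ u = t ∨ u ∈ A ∨ u ∈ B := by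
    rcases (hmemc u).mp hu with h | h
    · rcases hq₁X u h with h' | h' | h'
      exacts [Or.inl h', Or.inr (Or.inl h'), Or.inr (Or.inr (Or.inl h'))]
    · rcases hq₂X u h with h' | h' | h'
      exacts [Or.inl h', Or.inr (Or.inl h'), Or.inr (Or.inr (Or.inr h'))]
  have hwcls : w = s ∨ w = t ∨ w ∈ A ∨ w ∈ B := by
    rcases (hmemc w).mp hw with h | h
    · rcases hq₁X w h with h' | h' | h'
      exacts [Or.inl h', Or.inr (Or.inl h'), Or.inr (Or.inr (Or.inl h'))]
    · rcases hq₂X w h with h' | h' | h'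
      exacts [Or.inl h', Or.inr (Or.inl h'), Or.inr (Or.inr (Or.inr h'))]
  rcases hucls with hus | hut | huA | huB <;> rcases hwcls with hws | hwt | hwA | hwB
  · exact hadj.ne (hus.trans hws.symm)
  · exact hnadj (hus ▸ hwt ▸ hadj)
  · exact done1 (hin1 u hu (Or.inl hus)) (hin1 w hw (Or.inr (Or.inr hwA)))
  · exact done2 (hin2 u hu (Or.inl hus)) (hin2 w hw (Or.inr (Or.inr hwB)))
  · exact hnadj (hws ▸ hut ▸ hadj.symm)
  · exact hadj.ne (hut.trans hwt.symm)
  · exact done1 (hin1 u hu (Or.inr (Or.inl hut))) (hin1 w hw (Or.inr (Or.inr hwA)))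
  · exact done2 (hin2 u hu (Or.inr (Or.inl hut))) (hin2 w hw (Or.inr (Or.inr hwB)))
  · exact done1 (hin1 u hu (Or.inr (Or.inr huA))) (hin1 w hw (Or.inl hws))
  · exact done1 (hin1 u hu (Or.inr (Or.inr huA))) (hin1 w hw (Or.inr (Or.inl hwt)))
  · exact done1 (hin1 u hu (Or.inr (Or.inr huA))) (hin1 w hw (Or.inr (Or.inr hwA)))
  · exact side_adj_disjoint hsep huA hwB hadj
  · exact done2 (hin2 u hu (Or.inr (Or.inr huB))) (hin2 w hw (Or.inl hws))
  · exact done2 (hin2 u hu (Or.inr (Or.inr huB))) (hin2 w hw (Or.inr (Or.inl hwt)))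
  · exact side_adj_disjoint hsep hwA huB hadj.symm
  · exact done2 (hin2 u hu (Or.inr (Or.inr huB))) (hin2 w hw (Or.inr (Or.inr hwB)))

lemma isSimplicial_of_induce {s : Set V} {v : V} (hv : v ∈ s)
    (hN : ∀ x, Γ.Adj v x → x ∈ s) (h : IsSimplicial (Γ.induce s) ⟨v, hv⟩) :
    IsSimplicial Γ v := by
  intro u w hu hw huw
  have hus : u ∈ s := hN u hu
  have hws : w ∈ s := hN w hw
  exact h ⟨u, hus⟩ ⟨w, hws⟩ hu hw (fun hh => huw (congrArg Subtype.val hh))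

lemma side_closure (hsep : Separates Γ a b S) {v x : V}
    (hv : v ∈ side Γ S a) (hadj : Γ.Adj v x) : x ∈ (↑S : Set V) ∪ side Γ S a := by
  by_cases hx : x ∈ S
  · exact Or.inl hx
  · exact Or.inr (side_adj hv hadj hx)

universe u

theorem dirac_pair : ∀ (n : ℕ) {V : Type u} [Fintype V] [DecidableEq V] (Γ : SimpleGraph V),
    Fintype.card V ≤ n → IsChordal Γ → ∀ a b : V, a ≠ b → ¬Γ.Adj a b →
    ∃ u w : V, u ≠ w ∧ ¬Γ.Adj u w ∧ IsSimplicial Γ u ∧ IsSimplicial Γ w := by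
  intro n
  induction n with
  | zero =>
    intro V _ _ Γ hcard _ a b _ _
    have : 0 < Fintype.card V := Fintype.card_pos_iff.mpr ⟨a⟩
    omega
  | succ n ih =>
    intro V _ _ Γ hcard hch a b hab hnadj
    classical
    obtain ⟨S, hsep, hmin⟩ := exists_min_separator hab hnadj
    have key : ∀ (c d : V), Separates Γ c d S →
        (∀ T, Separates Γ c d T → S.card ≤ T.card) →
        ∃ u ∈ side Γ S c, IsSimplicial Γ u := by
      intro c d hsep' hmin'
      set sA : Set V := ↑S ∪ side Γ S c with hsA
      have hcA : c ∈ sA := Or.inr (mem_side_self hsep'.1)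
      have hdA : d ∉ sA := by
        rintro (h | h)
        · exact hsep'.2.1 h
        · exact side_disjoint hsep' h (mem_side_self hsep'.2.1)
      have hcardA : Fintype.card ↥sA ≤ n := by
        have h1 : Fintype.card ↥sA < Fintype.card V := by
          have h2 := Fintype.card_subtype_lt (p := fun x => x ∈ sA) hdA
          convert h2 using 2
        omega
      have hchA : IsChordal (Γ.induce sA) := IsChordal.induce hch sA
      have transfer : ∀ (x : ↥sA), x.1 ∈ side Γ S c →
          IsSimplicial (Γ.induce sA) x → ∃ u ∈ side Γ S c, IsSimplicial Γ u := by
        intro x hx hsimp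
        refine ⟨x.1, hx, isSimplicial_of_induce x.2 (fun y hy => side_closure hsep' hx hy) ?_⟩
        convert hsimp
      by_cases hcomp : ∀ x y : ↥sA, x ≠ y → (Γ.induce sA).Adj x y
      · exact transfer ⟨c, hcA⟩ (mem_side_self hsep'.1)
          (fun u w hu hw huw => hcomp u w huw)
      · push_neg at hcomp
        obtain ⟨x, y, hxy, hxynadj⟩ := hcomp
        obtain ⟨u, w, huw, hnadjuw, hsimpu, hsimpw⟩ :=
          ih (Γ.induce sA) hcardA hchA x y hxy hxynadj
        have hnotboth : u.1 ∉ S ∨ w.1 ∉ S := by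
          by_contra hboth
          push_neg at hboth
          have huw' : u.1 ≠ w.1 := fun h => huw (Subtype.ext h)
          exact hnadjuw (min_separator_clique hch hsep' hmin' hboth.1 hboth.2 huw')
        rcases hnotboth with h | h
        · rcases u.2 with h' | h'
          · exact absurd h' h
          · exact transfer u h' hsimpu
        · rcases w.2 with h' | h'
          · exact absurd h' h
          · exact transfer w h' hsimpw
    obtain ⟨u, hu, hsimpu⟩ := key a b hsep hmin
    obtain ⟨w, hw, hsimpw⟩ := key b a (sep_symm hsep) (fun T hT => hmin T (sep_symm hT))
    refine ⟨u, w, ?_, side_adj_disjoint hsep hu hw, hsimpu, hsimpw⟩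
    intro h
    exact side_disjoint hsep hu (h ▸ hw)

theorem dirac {V : Type u} [Fintype V] [DecidableEq V] [Nonempty V] (Γ : SimpleGraph V)
    (hch : IsChordal Γ) : ∃ v, IsSimplicial Γ v := by
  by_cases hcomp : ∀ x y : V, x ≠ y → Γ.Adj x y
  · exact ⟨Classical.arbitrary V, fun u w _ _ huw => hcomp u w huw⟩
  · push_neg at hcomp
    obtain ⟨x, y, hxy, hnadj⟩ := hcomp
    obtain ⟨u, _, _, _, hu, _⟩ := dirac_pair (Fintype.card V) Γ le_rfl hch x y hxy hnadj
    exact ⟨u, hu⟩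

def eqvOption [DecidableEq V] (v : V) : V ≃ Option ↥({x : V | x ≠ v}) where
  toFun x := if h : x = v then none else some ⟨x, h⟩
  invFun o := o.elim v Subtype.val
  left_inv x := by by_cases h : x = v <;> simp [h]
  right_inv o := by
    cases o with
    | none => simp
    | some y =>
      have : y.1 ≠ v := y.2
      simp [this]

theorem exists_peo : ∀ (n : ℕ) {V : Type u} [Fintype V] [DecidableEq V] (Γ : SimpleGraph V),
    Fintype.card V ≤ n → IsChordal Γ →
    ∃ f : V ≃ Fin (Fintype.card V), IsPerfectEliminationOrdering Γ f := by
  intro n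
  induction n with
  | zero =>
    intro V _ _ Γ hcard _
    have : IsEmpty V := by
      rw [← Fintype.card_eq_zero_iff]; omega
    exact ⟨Fintype.equivFin V, fun i => isEmptyElim i⟩
  | succ n ih =>
    intro V _ _ Γ hcard hch
    classical
    rcases isEmpty_or_nonempty V with hV | hV
    · exact ⟨Fintype.equivFin V, fun i => isEmptyElim i⟩
    obtain ⟨v, hv⟩ := dirac Γ hch
    set s : Set V := {x : V | x ≠ v} with hs
    have hvs : v ∉ s := by simp [hs]
    have hcards : Fintype.card ↥s < Fintype.card V := by
      have h2 := Fintype.card_subtype_lt (p := fun x => x ∈ s) (x := v) hvs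
      convert h2 using 2
    obtain ⟨f', hf'⟩ := ih (Γ.induce s) (by omega) (IsChordal.induce hch s)
    have hmV : Fintype.card V = Fintype.card ↥s + 1 := by
      have h1 : Fintype.card ↥s = Fintype.card {x : V // x ≠ v} := by
        convert rfl using 2 <;> rfl
      have h2 : Fintype.card {x : V // x ≠ v} = Fintype.card V - 1 := by
        have h3 := Fintype.card_subtype_compl (fun x : V => x = v)
        rw [Fintype.card_subtype_eq] at h3
        convert h3 using 2
      have h4 : 1 ≤ Fintype.card V := Fintype.card_pos_iff.mpr hV
      omega
    set g : V ≃ Fin (Fintype.card ↥s + 1) :=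
      (eqvOption v).trans (f'.optionCongr.trans finSuccEquivLast.symm) with hg
    have hgv : g v = Fin.last (Fintype.card ↥s) := by
      simp [hg, eqvOption, Equiv.optionCongr]
    have hgx : ∀ (x : V) (hx : x ≠ v), g x = (f' ⟨x, hx⟩).castSucc := by
      intro x hx
      simp [hg, eqvOption, hx, Equiv.optionCongr]
    refine ⟨g.trans (finCongr hmV.symm), ?_⟩
    intro i x y hix hiy hxlt hylt hxy
    have hval : ∀ z : V, ((g.trans (finCongr hmV.symm)) z).val = (g z).val := by
      intro z; simp
    rw [Fin.lt_def, hval, hval] at hxlt hylt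
    by_cases hi : i = v
    · subst hi
      exact hv x y hix hiy hxy
    · have hgi : (g i).val = (f' ⟨i, hi⟩).val := by rw [hgx i hi]; simp
      have e2 : (g i).val < Fintype.card ↥s := by
        rw [hgi]; exact (f' ⟨i, hi⟩).isLt
      have hx : x ≠ v := by
        intro h
        have e1 : (g x).val = Fintype.card ↥s := by rw [h, hgv]; rfl
        omega
      have hy : y ≠ v := by
        intro h
        have e1 : (g y).val = Fintype.card ↥s := by rw [h, hgv]; rfl
        omega
      rw [hgx x hx, hgi] at hxlt
      rw [hgx y hy, hgi] at hylt
      simp only [Fin.coe_castSucc] at hxlt hylt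
      have hadjix : (Γ.induce s).Adj ⟨i, hi⟩ ⟨x, hx⟩ := hix
      have hadjiy : (Γ.induce s).Adj ⟨i, hi⟩ ⟨y, hy⟩ := hiy
      have := hf' ⟨i, hi⟩ ⟨x, hx⟩ ⟨y, hy⟩ hadjix hadjiy
        (by rw [Fin.lt_def]; exact hxlt) (by rw [Fin.lt_def]; exact hylt)
        (fun h => hxy (congrArg Subtype.val h))
      exact this

lemma mem_support_iff_mem_tail {y : V} {p : Γ.Walk y y} (hp : p.length ≠ 0) (x : V) :
    x ∈ p.support ↔ x ∈ p.support.tail := by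
  have hy : y ∈ p.support.tail := by
    have hidx : p.length - 1 + 1 = p.length := by omega
    have hlt : p.length - 1 < p.support.tail.length := by
      rw [List.length_tail, p.length_support]; omega
    have h1 : p.support.tail[p.length - 1]'hlt = y := by
      rw [List.getElem_tail]
      simp only [hidx]
      rw [getVert_eq_support_getElem p (by rw [p.length_support]; omega)]
      exact p.getVert_length
    have h2 := List.getElem_mem hlt
    rwa [h1] at h2
  constructor
  · intro hx
    rcases (p.mem_support_iff).mp hx with rfl | h
    · exact hy
    · exact h
  · exact fun h => List.mem_of_mem_tail h

theorem chordal_of_peo [Fintype V] [DecidableEq V]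
    {f : V ≃ Fin (Fintype.card V)} (hf : IsPerfectEliminationOrdering Γ f) : IsChordal Γ := by
  intro v c hc hlen
  classical
  have hcne : c.support.toFinset.Nonempty := ⟨v, by simp [c.start_mem_support]⟩
  obtain ⟨m, hmF, hmax⟩ := Finset.exists_max_image c.support.toFinset f hcne
  rw [List.mem_toFinset] at hmF
  have hmax' : ∀ z ∈ c.support, f z ≤ f m := fun z hz => hmax z (List.mem_toFinset.mpr hz)
  set c' := c.rotate m hmF with hc'def
  have hc' : c'.IsCycle := hc.rotate hmF
  have hL : c'.length = c.length := length_rotate c hmF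
  have hL4 : 4 ≤ c'.length := by omega
  have hmemsup : ∀ x, x ∈ c'.support ↔ x ∈ c.support := by
    intro x
    rw [mem_support_iff_mem_tail (by omega) x, mem_support_iff_mem_tail (p := c) (by omega) x,
      (Walk.support_rotate c m hmF).mem_iff]
  have hu : Γ.Adj m (c'.getVert 1) := by
    have := c'.adj_getVert_succ (i := 0) (by omega)
    rwa [c'.getVert_zero] at this
  have hw : Γ.Adj m (c'.getVert (c'.length - 1)) := by
    have h1 := c'.adj_getVert_succ (i := c'.length - 1) (by omega)
    rw [show c'.length - 1 + 1 = c'.length by omega, c'.getVert_length] at h1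
    exact h1.symm
  have humem : c'.getVert 1 ∈ c'.support :=
    Walk.mem_support_iff_exists_getVert.mpr ⟨1, rfl, by omega⟩
  have hwmem : c'.getVert (c'.length - 1) ∈ c'.support :=
    Walk.mem_support_iff_exists_getVert.mpr ⟨c'.length - 1, rfl, by omega⟩
  have hune : c'.getVert 1 ≠ m := hu.ne'
  have hwne : c'.getVert (c'.length - 1) ≠ m := hw.ne'
  have hfu : f (c'.getVert 1) < f m :=
    lt_of_le_of_ne (hmax' _ ((hmemsup _).mp humem)) (fun h => hune (f.injective h))
  have hfw : f (c'.getVert (c'.length - 1)) < f m :=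
    lt_of_le_of_ne (hmax' _ ((hmemsup _).mp hwmem)) (fun h => hwne (f.injective h))
  have hne_uw : c'.getVert 1 ≠ c'.getVert (c'.length - 1) := by
    intro h
    have := cycle_getVert_inj hc' (by omega) (by omega) (by omega) (by omega) h
    omega
  have hadj_uw : Γ.Adj (c'.getVert 1) (c'.getVert (c'.length - 1)) :=
    hf m _ _ hu hw hfu hfw hne_uw
  refine ⟨_, _, (hmemsup _).mp humem, (hmemsup _).mp hwmem, hadj_uw, ?_⟩
  intro hmem
  have hmem' : s(c'.getVert 1, c'.getVert (c'.length - 1)) ∈ c'.edges :=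
    ((Walk.rotate_edges c m hmF).mem_iff).mpr hmem
  have hadjsub : c'.toSubgraph.Adj (c'.getVert 1) (c'.getVert (c'.length - 1)) := by
    rw [← SimpleGraph.Subgraph.mem_edgeSet, Walk.mem_edges_toSubgraph]
    exact hmem'
  obtain ⟨i, hi_eq, hi_lt⟩ := (c'.toSubgraph_adj_iff).mp hadjsub
  rw [Sym2.eq_iff] at hi_eq
  have hgv0 : c'.getVert 0 = m := c'.getVert_zero
  rcases hi_eq with ⟨h1, h2⟩ | ⟨h1, h2⟩
  · have hi1 : 1 ≤ i := by
      rcases Nat.eq_zero_or_pos i with rfl | h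
      · rw [hgv0] at h1; exact absurd h1.symm hune
      · exact h
    have hieq : i = 1 := cycle_getVert_inj hc' hi1 (by omega) (by omega) (by omega) h1
    subst hieq
    have := cycle_getVert_inj hc' (by omega) (by omega) (by omega) (by omega) h2
    omega
  · have hi1 : 1 ≤ i := by
      rcases Nat.eq_zero_or_pos i with rfl | h
      · rw [hgv0] at h1; exact absurd h1.symm hwne
      · exact h
    have hieq : i = c'.length - 1 :=
      cycle_getVert_inj hc' hi1 (by omega) (by omega) (by omega) h1
    rw [hieq, show c'.length - 1 + 1 = c'.length by omega, c'.getVert_length] at h2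
    exact hune h2.symm

end ChordalAux

/-- Fulkerson--Gross: a finite graph is chordal if and only if it admits a perfect
elimination ordering. -/
theorem chordal_iff_perfect_elimination_ordering {V : Type*} [Fintype V] [DecidableEq V]
    (Γ : SimpleGraph V) :
    IsChordal Γ ↔ ∃ f : V ≃ Fin (Fintype.card V), IsPerfectEliminationOrdering Γ f := by
  constructor
  · intro hch
    exact ChordalAux.exists_peo (Fintype.card V) Γ le_rfl hch
  · rintro ⟨f, hf⟩
    exact ChordalAux.chordal_of_peo hf
end

section
/- A subgroup of a free group is free; in particular, if the fundamental group of a closed orientable surface of positive genus embedded as a subgroup of some group G is not free, then G cannot be free. Concretely: the fundamental group of a closed orientable surface of genus g ≥ 1 is not a free group. -/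
/-- The single defining relation of the genus-`g` surface group:
`(a₁,b₁)(a₂,b₂)⋯(a_g,b_g)` in the free group on `2g` generators, where
`(a,b) = a⁻¹b⁻¹ab`, `aᵢ` is the `2i`-th generator and `bᵢ` the `(2i+1)`-st. -/
def surfaceRel (g : ℕ) : FreeGroup (Fin (2 * g)) :=
  ((List.finRange g).map fun (i : Fin g) =>
    letI a : FreeGroup (Fin (2 * g)) := FreeGroup.of ⟨2 * i, by have := i.isLt; omega⟩
    letI b : FreeGroup (Fin (2 * g)) := FreeGroup.of ⟨2 * i + 1, by have := i.isLt; omega⟩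
    a⁻¹ * b⁻¹ * a * b).prod

/-- The fundamental group of the closed orientable surface of genus `g`:
generators `a₁,b₁,…,a_g,b_g` and the single relation `(a₁,b₁)⋯(a_g,b_g) = 1`. -/
def SurfaceGroup (g : ℕ) : Type :=
  PresentedGroup {r : FreeGroup (Fin (2 * g)) | r = surfaceRel g}

instance (g : ℕ) : Group (SurfaceGroup g) :=
  inferInstanceAs (Group (PresentedGroup _))

/-- Homomorphisms out of the surface group correspond to tuples killing the relator. -/
noncomputable def surfaceHomEquiv (g : ℕ) (K : Type) [Group K] :
    (SurfaceGroup g →* K) ≃ {f : Fin (2 * g) → K // FreeGroup.lift f (surfaceRel g) = 1} where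
  toFun φ := ⟨fun i => φ (PresentedGroup.of i), by
    have h : FreeGroup.lift (fun i => φ (PresentedGroup.of i)) =
        φ.comp (PresentedGroup.mk {r : FreeGroup (Fin (2 * g)) | r = surfaceRel g}) := by
      ext i
      simp only [FreeGroup.lift_apply_of, MonoidHom.comp_apply]
      rfl
    rw [h]
    change φ ((PresentedGroup.mk {r : FreeGroup (Fin (2 * g)) | r = surfaceRel g}) (surfaceRel g)) = 1
    have : (PresentedGroup.mk {r : FreeGroup (Fin (2 * g)) | r = surfaceRel g})
        (surfaceRel g) = 1 := by
      apply (QuotientGroup.eq_one_iff _).2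
      exact Subgroup.subset_normalClosure rfl
    exact (congrArg φ this).trans (map_one φ)⟩
  invFun f := PresentedGroup.toGroup (f := f.1) (by rintro r rfl; exact f.2)
  left_inv φ := by
    apply PresentedGroup.ext
    intro x
    exact PresentedGroup.toGroup.of _
  right_inv f := by
    ext i
    exact PresentedGroup.toGroup.of _

example : True := trivial

lemma surfaceRel_lift_eq_one_of_comm {g : ℕ} {K : Type} [CommGroup K] (f : Fin (2 * g) → K) :
    FreeGroup.lift f (surfaceRel g) = 1 := by
  unfold surfaceRel
  rw [map_list_prod]
  apply List.prod_eq_one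
  intro x hx
  simp only [List.map_map, List.mem_map] at hx
  obtain ⟨i, -, rfl⟩ := hx
  simp only [Function.comp_apply, map_mul, map_inv, FreeGroup.lift_apply_of]
  simp [mul_comm, mul_assoc, mul_left_comm]

lemma surfaceRel_lift_head {g : ℕ} {K : Type} [Group K] (c d : K) :
    FreeGroup.lift (fun j : Fin (2 * (g + 1)) =>
        if j.val = 0 then c else if j.val = 1 then d else 1) (surfaceRel (g + 1)) =
      c⁻¹ * d⁻¹ * c * d := by
  set f : Fin (2 * (g + 1)) → K :=
    fun j => if j.val = 0 then c else if j.val = 1 then d else 1 with hf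
  unfold surfaceRel
  rw [List.finRange_succ, List.map_cons, List.prod_cons, map_mul]
  have h1 : (FreeGroup.lift f)
      ((FreeGroup.of (⟨2 * ((0 : Fin (g+1)) : ℕ), by omega⟩ : Fin (2 * (g+1))))⁻¹ *
       (FreeGroup.of ⟨2 * ((0 : Fin (g+1)) : ℕ) + 1, by omega⟩)⁻¹ *
       FreeGroup.of ⟨2 * ((0 : Fin (g+1)) : ℕ), by omega⟩ *
       FreeGroup.of ⟨2 * ((0 : Fin (g+1)) : ℕ) + 1, by omega⟩) = c⁻¹ * d⁻¹ * c * d := by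
    simp [hf, Nat.mod_eq_of_lt (show 1 < 2 * (g + 1) by omega)]
  have h2 : (FreeGroup.lift f)
      (((List.finRange g).map Fin.succ).map fun i : Fin (g+1) =>
        (FreeGroup.of (⟨2 * (i : ℕ), by omega⟩ : Fin (2 * (g+1))))⁻¹ *
        (FreeGroup.of ⟨2 * (i : ℕ) + 1, by omega⟩)⁻¹ *
        FreeGroup.of ⟨2 * (i : ℕ), by omega⟩ *
        FreeGroup.of ⟨2 * (i : ℕ) + 1, by omega⟩).prod = 1 := by
    rw [map_list_prod]
    apply List.prod_eq_one
    intro x hx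
    simp only [List.map_map, List.mem_map] at hx
    obtain ⟨i, -, rfl⟩ := hx
    have hv1 : f ⟨2 * ((Fin.succ i : Fin (g+1)) : ℕ), by omega⟩ = 1 := by
      have : 2 * ((Fin.succ i : Fin (g+1)) : ℕ) ≠ 0 ∧
          2 * ((Fin.succ i : Fin (g+1)) : ℕ) ≠ 1 := by
        simp only [Fin.val_succ]; omega
      simp [hf, this.1, this.2]
    have hv2 : f ⟨2 * ((Fin.succ i : Fin (g+1)) : ℕ) + 1, by omega⟩ = 1 := by
      have : 2 * ((Fin.succ i : Fin (g+1)) : ℕ) + 1 ≠ 0 ∧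
          2 * ((Fin.succ i : Fin (g+1)) : ℕ) + 1 ≠ 1 := by
        simp only [Fin.val_succ]; omega
      simp [hf, this.1, this.2]
    simp only [Function.comp_apply, map_mul, map_inv, FreeGroup.lift_apply_of, hv1, hv2]
    group
  rw [h1, h2, mul_one]


/-- Every subgroup of a free group is free (Nielsen--Schreier); in contrast, the
fundamental group of a closed orientable surface of genus `g ≥ 1` is not a free group. -/
theorem surface_group_not_free :
    (∀ (ι : Type) (H : Subgroup (FreeGroup ι)), IsFreeGroup H) ∧
    (∀ g : ℕ, 1 ≤ g → ¬ IsFreeGroup (SurfaceGroup g)) := by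
  constructor
  · intro ι H
    infer_instance
  · intro g hg hfree
    classical
    obtain ⟨ι, ⟨b⟩⟩ := hfree.nonempty_basis
    -- abelian counting: pin down the rank
    let K1 := Multiplicative (ZMod 2)
    have e1 : (ι → K1) ≃ (Fin (2 * g) → K1) :=
      (b.lift.trans (surfaceHomEquiv g K1)).trans
        (Equiv.subtypeUnivEquiv fun f => surfaceRel_lift_eq_one_of_comm f)
    have hfin1 : Finite (ι → K1) := Finite.of_equiv _ e1.symm
    have hone : (Multiplicative.ofAdd (1 : ZMod 2)) ≠ (1 : K1) := by decide
    have hfinι : Finite ι := by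
      refine Finite.of_injective
        (fun i => (Pi.mulSingle i (Multiplicative.ofAdd (1 : ZMod 2)) : ι → K1)) ?_
      intro a a' haa'
      by_contra hne
      have := congrFun haa' a
      dsimp only at this
      rw [Pi.mulSingle_eq_same, Pi.mulSingle_eq_of_ne hne] at this
      exact hone this
    have := Fintype.ofFinite ι
    have hcard : Fintype.card ι = 2 * g := by
      have h1 : Fintype.card (ι → K1) = Fintype.card (Fin (2 * g) → K1) :=
        Fintype.card_congr e1
      rw [Fintype.card_fun, Fintype.card_fun] at h1
      have hK1 : Fintype.card K1 = 2 := by decide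
      rw [hK1, Fintype.card_fin] at h1
      exact Nat.pow_right_injective le_rfl h1
    -- nonabelian counting: contradiction
    obtain ⟨g', rfl⟩ : ∃ g', g = g' + 1 := ⟨g - 1, by omega⟩
    let K2 := Equiv.Perm (Fin 3)
    have e2 : (ι → K2) ≃
        {f : Fin (2 * (g' + 1)) → K2 // FreeGroup.lift f (surfaceRel (g' + 1)) = 1} :=
      b.lift.trans (surfaceHomEquiv (g' + 1) K2)
    set c : K2 := Equiv.swap 0 1 with hc
    set d : K2 := Equiv.swap 0 2 with hd
    set f₀ : Fin (2 * (g' + 1)) → K2 :=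
      fun j => if j.val = 0 then c else if j.val = 1 then d else 1 with hf₀
    have hbad : ¬ (FreeGroup.lift f₀ (surfaceRel (g' + 1)) = 1) := by
      rw [hf₀, surfaceRel_lift_head c d]
      decide
    have hlt : Fintype.card {f : Fin (2 * (g' + 1)) → K2 //
        FreeGroup.lift f (surfaceRel (g' + 1)) = 1} < Fintype.card (Fin (2 * (g' + 1)) → K2) :=
      Fintype.card_subtype_lt hbad
    have heq : Fintype.card (ι → K2) = Fintype.card (Fin (2 * (g' + 1)) → K2) := by
      rw [Fintype.card_fun, Fintype.card_fun, hcard, Fintype.card_fin]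
    rw [Fintype.card_congr e2] at heq
    omega
end
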